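/- arXiv:2105.11992 — 9 statements merged into one kernel-verified Lean document; each statement's English description precedes it below -/
import Mathlib

section
/- Let A be a finite set with |A| > k ≥ 1, x : A → [0,1], and e ∈ A. With q_A(B) = (1/C(|A|,k)) · (1 + x(A\B)/(|A|-k) − x(B)/k) for k-subsets B of A, we have ∑_{B ⊆ A, |B|=k, e ∈ B} q_A(B) = (k − x_e)/|A| + x(A\{e})/(|A|(|A|−1)). -/
open Finset
lemma aux_bij {ι : Type*} [DecidableEq ι] (Q : Finset ι) (i : ι) (hi : i ∈ Q) (s : ℕ)
    (f : Finset ι → ℝ) :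
    ∑ B ∈ (Q.powersetCard (s+1)).filter (fun B => i ∈ B), f B
      = ∑ C ∈ (Q.erase i).powersetCard s, f (insert i C) := by
  refine Finset.sum_nbij' (fun B => B.erase i) (fun C => insert i C) ?_ ?_ ?_ ?_ ?_
  · intro B hB
    simp only [mem_filter, mem_powersetCard] at hB ⊢
    obtain ⟨⟨hsub, hcard⟩, hiB⟩ := hB
    exact ⟨erase_subset_erase i hsub, by rw [card_erase_of_mem hiB, hcard]; rfl⟩
  · intro C hC
    simp only [mem_filter, mem_powersetCard] at hC ⊢
    obtain ⟨hsub, hcard⟩ := hC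
    have hiC : i ∉ C := fun h => (mem_erase.mp (hsub h)).1 rfl
    refine ⟨⟨?_, ?_⟩, mem_insert_self _ _⟩
    · intro a ha
      rcases mem_insert.mp ha with rfl | ha
      · exact hi
      · exact (mem_erase.mp (hsub ha)).2
    · rw [card_insert_of_notMem hiC, hcard]
  · intro B hB
    simp only [mem_filter] at hB
    exact insert_erase hB.2
  · intro C hC
    simp only [mem_powersetCard] at hC
    have hiC : i ∉ C := fun h => (mem_erase.mp (hC.1 h)).1 rfl
    exact erase_insert hiC
  · intro B hB
    simp only [mem_filter] at hB
    rw [insert_erase hB.2]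

open Finset
lemma aux_count {ι : Type*} [DecidableEq ι] (Q : Finset ι) (i : ι) (hi : i ∈ Q) (s : ℕ) :
    ((((Q.powersetCard (s+1)).filter (fun B => i ∈ B)).card : ℝ))
      = ((Q.card - 1).choose s : ℝ) := by
  have h := aux_bij Q i hi s (fun _ => (1:ℝ))
  simpa [card_erase_of_mem hi] using h

lemma aux_T {ι : Type*} [DecidableEq ι] (Q : Finset ι) (s : ℕ) (x : ι → ℝ) :
    ∑ C ∈ Q.powersetCard (s+1), ∑ i ∈ C, x i
      = ((Q.card - 1).choose s : ℝ) * ∑ i ∈ Q, x i := by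
  have h1 : ∀ C ∈ Q.powersetCard (s+1), ∑ i ∈ C, x i
      = ∑ i ∈ Q, if i ∈ C then x i else 0 := by
    intro C hC
    rw [Finset.sum_ite_mem, inter_eq_right.mpr (mem_powersetCard.mp hC).1]
  rw [Finset.sum_congr rfl h1, Finset.sum_comm, Finset.mul_sum]
  refine Finset.sum_congr rfl fun i hi => ?_
  rw [← Finset.sum_filter, Finset.sum_const, nsmul_eq_mul, aux_count Q i hi s]

open Finset
theorem stmt2 {ι : Type*} [DecidableEq ι] (A : Finset ι) (k : ℕ) (hk1 : 1 ≤ k)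
    (hk2 : k < A.card) (x : ι → ℝ) (hx : ∀ i ∈ A, x i ∈ Set.Icc (0:ℝ) 1)
    (e : ι) (he : e ∈ A) :
    ∑ B ∈ (A.powersetCard k).filter (fun B => e ∈ B),
      (1 / (A.card.choose k : ℝ)) *
        (1 + (∑ i ∈ A \ B, x i) / ((A.card : ℝ) - k) - (∑ i ∈ B, x i) / k)
      = ((k : ℝ) - x e) / A.card
        + (∑ i ∈ A.erase e, x i) / ((A.card : ℝ) * ((A.card : ℝ) - 1)) := by
  classical
  obtain ⟨m, rfl⟩ : ∃ m, k = m + 1 := ⟨k - 1, (Nat.succ_pred_eq_of_pos hk1).symm⟩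
  obtain ⟨p, hn⟩ : ∃ p, A.card = p + m + 2 := ⟨A.card - (m+2), by omega⟩
  rw [aux_bij A e he m]
  have hcard_erase : (A.erase e).card = p + m + 1 := by rw [card_erase_of_mem he]; omega
  have hstep : ∀ C ∈ (A.erase e).powersetCard m,
      1 / ((A.card.choose (m + 1) : ℕ) : ℝ) *
        (1 + (∑ i ∈ A \ insert e C, x i) / ((A.card : ℝ) - ((m + 1 : ℕ) : ℝ))
          - (∑ i ∈ insert e C, x i) / ((m + 1 : ℕ) : ℝ))
      = 1 / ((A.card.choose (m + 1) : ℕ) : ℝ) *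
          (1 + (∑ i ∈ A.erase e, x i) / ((A.card : ℝ) - ((m + 1 : ℕ) : ℝ))
            - x e / ((m + 1 : ℕ) : ℝ))
        - (1 / ((A.card.choose (m + 1) : ℕ) : ℝ) *
            (1 / ((A.card : ℝ) - ((m + 1 : ℕ) : ℝ)) + 1 / ((m + 1 : ℕ) : ℝ)))
          * (∑ i ∈ C, x i) := by
    intro C hC
    obtain ⟨hsub, hcardC⟩ := mem_powersetCard.mp hC
    have heC : e ∉ C := fun h => (mem_erase.mp (hsub h)).1 rfl
    have h1 : A \ insert e C = A.erase e \ C := by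
      ext a; simp only [mem_erase, mem_sdiff, mem_insert, not_or]; tauto
    rw [h1, Finset.sum_sdiff_eq_sub hsub, Finset.sum_insert heC]
    ring
  rw [Finset.sum_congr rfl hstep, Finset.sum_sub_distrib, Finset.sum_const, ← Finset.mul_sum,
    Finset.card_powersetCard, hcard_erase]
  rw [nsmul_eq_mul]
  rcases m with _ | s
  · simp only [Finset.powersetCard_zero, Finset.sum_singleton, Finset.sum_empty, mul_zero, sub_zero]
    rw [hn]
    have hp2 : ((p:ℝ)+2) ≠ 0 := by positivity
    have hp1 : ((p:ℝ)+1) ≠ 0 := by positivity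
    simp only [zero_add, add_zero, Nat.choose_one_right, Nat.choose_zero_right]
    push_cast
    ring_nf
    field_simp
    ring
  · rw [aux_T (A.erase e) s x]
    have h2' : (A.erase e).card - 1 = p + s + 1 := by omega
    rw [h2', hn]
    rw [show p + (s+1) + 2 = p + s + 3 from by omega, show p + (s+1) + 1 = p + s + 2 from by omega,
       show s + 1 + 1 = s + 2 from rfl]
    have key1 : (p+s+3) * ((p+s+2).choose (s+1)) = ((p+s+3).choose (s+2)) * (s+2) := by
      have h := Nat.add_one_mul_choose_eq (p+s+2) (s+1)
      simpa [Nat.succ_eq_add_one, show p+s+2+1 = p+s+3 from by omega] using h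
    have key2 : (p+s+2) * ((p+s+1).choose s) = ((p+s+2).choose (s+1)) * (s+1) := by
      have h := Nat.add_one_mul_choose_eq (p+s+1) s
      simpa [Nat.succ_eq_add_one, show p+s+1+1 = p+s+2 from by omega] using h
    have hk1' := congrArg (Nat.cast : ℕ → ℝ) key1
    have hk2' := congrArg (Nat.cast : ℕ → ℝ) key2
    push_cast at hk1' hk2'
    have hc1 : (((p+s+2).choose (s+1) : ℕ) : ℝ)
        = ((p+s+3).choose (s+2) : ℕ) * ((s:ℝ)+2) / ((p:ℝ)+s+3) := by
      rw [eq_div_iff (by positivity)]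
      linarith [hk1']
    have hc2 : (((p+s+1).choose s : ℕ) : ℝ)
        = (((p+s+2).choose (s+1) : ℕ) : ℝ) * ((s:ℝ)+1) / ((p:ℝ)+s+2) := by
      rw [eq_div_iff (by positivity)]
      linarith [hk2']
    rw [hc2, hc1]
    have hc0 : (((p+s+3).choose (s+2) : ℕ) : ℝ) ≠ 0 := by
      exact_mod_cast (Nat.choose_pos (by omega)).ne'
    have hps3 : ((p:ℝ)+s+3) ≠ 0 := by positivity
    have hps2 : ((p:ℝ)+s+2) ≠ 0 := by positivity
    have hs2 : ((s:ℝ)+2) ≠ 0 := by positivity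
    have hs1 : ((s:ℝ)+1) ≠ 0 := by positivity
    have hp1 : ((p:ℝ)+1) ≠ 0 := by positivity
    push_cast
    have hd : ((p:ℝ) + ↑s + 3 - (↑s + 2)) ≠ 0 := by
      have : ((p:ℝ) + ↑s + 3 - (↑s + 2)) = ↑p + 1 := by ring
      rw [this]; positivity
    have hd2 : ((p:ℝ) + ↑s + 3 - 1) ≠ 0 := by
      have : ((p:ℝ) + ↑s + 3 - 1) = ↑p + ↑s + 2 := by ring
      rw [this]; positivity
    field_simp
    ring
end

section
/- Define α(k,n) = k · C(n,k) · (1−k/n)^{n+1−k} · (k/n)^k for integers 0 ≤ k ≤ n (with α(0,m) = 0). For all n ≥ 2 and 1 ≤ k ≤ n−1 with k > 1, α(k,n) > α(k−1,n−1). -/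
lemma bern_aux (A : ℝ) (hApos : 0 < A) (n : ℕ) :
    A^(n+1) + ((n:ℝ)+1) * A^n ≤ (A+1)^(n+1) := by
  have h0 : (0:ℝ) < 1/A := by positivity
  have hb : (-2:ℝ) ≤ 1/A := by linarith
  have hber := one_add_mul_le_pow hb (n+1)
  have heq : (A + 1)^(n+1) = A^(n+1) * (1 + 1/A)^(n+1) := by
    rw [← mul_pow]; congr 1; field_simp
  rw [heq]
  calc A^(n+1) + ((n:ℝ)+1) * A^n
      = A^(n+1) * (1 + ((n+1 : ℕ) : ℝ) * (1/A)) := by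
        push_cast
        rw [pow_succ]
        field_simp
    _ ≤ A^(n+1) * (1 + 1/A)^(n+1) :=
        mul_le_mul_of_nonneg_left hber (by positivity)
lemma step_ineq (m : ℕ) (hm : 1 ≤ m) :
    (m:ℝ)^(m+1) * ((m:ℝ)+2)^(m+2) < ((m:ℝ)+1)^(2*m+3) := by
  have hm1 : (1:ℝ) ≤ (m:ℝ) := by exact_mod_cast hm
  have hApos : (0:ℝ) < (m:ℝ) * ((m:ℝ)+2) := by positivity
  have h1 := bern_aux ((m:ℝ) * ((m:ℝ)+2)) hApos m
  set A : ℝ := (m:ℝ) * ((m:ℝ)+2)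
  have hrw : ((m:ℝ)+1)^(2*m+3) = ((m:ℝ)+1) * (A+1)^(m+1) := by
    have hsq : A + 1 = ((m:ℝ)+1)^2 := by simp only [A]; ring
    rw [hsq, ← pow_mul]; ring
  have hlhs : (m:ℝ)^(m+1) * ((m:ℝ)+2)^(m+2) = ((m:ℝ)+2) * A^(m+1) := by
    simp only [A]; rw [mul_pow, pow_succ ((m:ℝ)+2)]; ring
  rw [hrw, hlhs]
  have h2 : ((m:ℝ)+1) * (A^(m+1) + ((m:ℝ)+1) * A^m) ≤ ((m:ℝ)+1) * (A+1)^(m+1) :=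
    mul_le_mul_of_nonneg_left h1 (by positivity)
  have h3 : ((m:ℝ)+2) * A^(m+1) < ((m:ℝ)+1) * (A^(m+1) + ((m:ℝ)+1) * A^m) := by
    have hAm : (0:ℝ) < A^m := by positivity
    have hx : ((m:ℝ)+1) * (A^(m+1) + ((m:ℝ)+1) * A^m)
        = ((m:ℝ)+2) * A^(m+1) + ((((m:ℝ)+1)^2 - A) - 1) * A^m + A^m := by
      rw [pow_succ]; ring
    have hA1 : ((m:ℝ)+1)^2 - A = 1 := by simp only [A]; ring
    rw [hx, hA1]; simp; linarith
  linarith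

lemma main_ineq (j : ℕ) (hj : 1 ≤ j) :
    ∀ m, j < m → (j:ℝ)^(j+1) * ((m:ℝ)+1)^(m+1) < ((j:ℝ)+1)^(j+1) * (m:ℝ)^(m+1) := by
  intro m
  induction m with
  | zero => omega
  | succ m ih =>
    intro hlt
    push_cast
    have hb : ((m:ℝ)+1+1) = (m:ℝ)+2 := by ring
    rw [hb]
    show (j:ℝ)^(j+1) * ((m:ℝ)+2)^(m+2) < ((j:ℝ)+1)^(j+1) * ((m:ℝ)+1)^(m+2)
    rcases Nat.lt_or_ge j m with hjm | hjm
    · have h1 := ih hjm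
      have hm1 : 1 ≤ m := le_trans hj (Nat.le_of_lt hjm)
      have h2 := step_ineq m hm1
      have hpos1 : (0:ℝ) < ((m:ℝ)+2)^(m+2) := by positivity
      have hpos2 : (0:ℝ) < ((j:ℝ)+1)^(j+1) := by positivity
      have hpos3 : (0:ℝ) < ((m:ℝ)+1)^(m+1) := by positivity
      have key : (j:ℝ)^(j+1) * ((m:ℝ)+2)^(m+2) * ((m:ℝ)+1)^(m+1)
          < ((j:ℝ)+1)^(j+1) * ((m:ℝ)+1)^(m+2) * ((m:ℝ)+1)^(m+1) := by
        calc (j:ℝ)^(j+1) * ((m:ℝ)+2)^(m+2) * ((m:ℝ)+1)^(m+1)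
            = ((j:ℝ)^(j+1) * ((m:ℝ)+1)^(m+1)) * ((m:ℝ)+2)^(m+2) := by ring
          _ < (((j:ℝ)+1)^(j+1) * (m:ℝ)^(m+1)) * ((m:ℝ)+2)^(m+2) :=
              mul_lt_mul_of_pos_right h1 hpos1
          _ = ((j:ℝ)+1)^(j+1) * ((m:ℝ)^(m+1) * ((m:ℝ)+2)^(m+2)) := by ring
          _ < ((j:ℝ)+1)^(j+1) * ((m:ℝ)+1)^(2*m+3) :=
              mul_lt_mul_of_pos_left h2 hpos2
          _ = ((j:ℝ)+1)^(j+1) * ((m:ℝ)+1)^(m+2) * ((m:ℝ)+1)^(m+1) := by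
              rw [mul_assoc, ← pow_add]
              congr 2
              omega
      exact lt_of_mul_lt_mul_right key (le_of_lt hpos3)
    · have hm : m = j := by omega
      subst hm
      have h2 := step_ineq m hj
      calc (m:ℝ)^(m+1) * ((m:ℝ)+2)^(m+2)
          < ((m:ℝ)+1)^(2*m+3) := h2
        _ = ((m:ℝ)+1)^(m+1) * ((m:ℝ)+1)^(m+2) := by rw [← pow_add]; congr 1; omega

theorem stmt6 (n k : ℕ) (hn : 2 ≤ n) (hk : 1 < k) (hk2 : k ≤ n - 1) :
    ((k:ℝ) - 1) * (((n-1).choose (k-1) : ℕ) : ℝ)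
        * (1 - ((k:ℝ)-1)/((n:ℝ)-1))^((n-1)+1-(k-1)) * (((k:ℝ)-1)/((n:ℝ)-1))^(k-1)
    < (k : ℝ) * ((n.choose k : ℕ) : ℝ) * (1 - (k:ℝ)/n)^(n+1-k) * ((k:ℝ)/n)^k := by
  obtain ⟨j, rfl⟩ : ∃ j, k = j + 1 := ⟨k - 1, by omega⟩
  obtain ⟨e, rfl⟩ : ∃ e, n = j + e + 2 := ⟨n - j - 2, by omega⟩
  have hj : 1 ≤ j := by omega
  have e1 : (j + e + 2 - 1) + 1 - (j + 1 - 1) = e + 2 := by omega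
  have e2 : j + e + 2 + 1 - (j + 1) = e + 2 := by omega
  have e3 : j + e + 2 - 1 = j + e + 1 := by omega
  have e4 : j + 1 - 1 = j := by omega
  rw [e1, e2, e3, e4]
  push_cast
  have hjR : (1:ℝ) ≤ (j:ℝ) := by exact_mod_cast hj
  have heR : (0:ℝ) ≤ (e:ℝ) := Nat.cast_nonneg e
  have hd1 : (0:ℝ) < (j:ℝ) + e + 1 := by linarith
  have hd2 : (0:ℝ) < (j:ℝ) + e + 2 := by linarith
  have r1 : ((j:ℝ) + 1 - 1) = (j:ℝ) := by ring
  have r2 : ((j:ℝ) + (e:ℝ) + 2 - 1) = (j:ℝ) + e + 1 := by ring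
  rw [r1, r2]
  have r3 : 1 - (j:ℝ)/((j:ℝ)+e+1) = ((e:ℝ)+1)/((j:ℝ)+e+1) := by field_simp; ring
  have r4 : 1 - ((j:ℝ)+1)/((j:ℝ)+e+2) = ((e:ℝ)+1)/((j:ℝ)+e+2) := by field_simp; ring
  rw [r3, r4]
  set C : ℝ := ((j+e+1).choose j : ℝ) with hCdef
  have hCpos : (0:ℝ) < C := by
    rw [hCdef]; exact_mod_cast Nat.choose_pos (by omega : j ≤ j + e + 1)
  have hC' : (((j+e+2).choose (j+1) : ℕ) : ℝ) = ((j:ℝ)+e+2) * C / ((j:ℝ)+1) := by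
    have h := Nat.add_one_mul_choose_eq (j+e+1) j
    have h2 : (j+e+2) * ((j+e+1).choose j) = ((j+e+2).choose (j+1)) * (j+1) := by
      simpa [Nat.succ_eq_add_one, show j+e+1+1 = j+e+2 by omega] using h
    have h3 := congrArg (Nat.cast : ℕ → ℝ) h2
    push_cast at h3
    rw [eq_div_iff (by positivity : ((j:ℝ)+1) ≠ 0)]
    rw [hCdef]
    linarith [h3]
  rw [hC']
  have hLeq : (j:ℝ) * C * (((e:ℝ)+1)/((j:ℝ)+e+1))^(e+2) * ((j:ℝ)/((j:ℝ)+e+1))^j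
      = (C * ((e:ℝ)+1)^(e+2) * (j:ℝ)^(j+1)) / ((j:ℝ)+e+1)^(j+e+2) := by
    have h1 : ((j:ℝ)+e+1) ≠ 0 := ne_of_gt hd1
    rw [div_pow, div_pow]
    field_simp
    ring
  have hReq : ((j:ℝ)+1) * (((j:ℝ)+e+2) * C / ((j:ℝ)+1)) * (((e:ℝ)+1)/((j:ℝ)+e+2))^(e+2)
        * (((j:ℝ)+1)/((j:ℝ)+e+2))^(j+1)
      = (C * ((e:ℝ)+1)^(e+2) * ((j:ℝ)+1)^(j+1)) / ((j:ℝ)+e+2)^(j+e+2) := by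
    have h1 : ((j:ℝ)+e+2) ≠ 0 := ne_of_gt hd2
    have hj1 : ((j:ℝ)+1) ≠ 0 := by positivity
    rw [div_pow, div_pow]
    field_simp
    ring
  rw [hLeq, hReq, div_lt_div_iff₀ (by positivity) (by positivity)]
  have key : (j:ℝ)^(j+1) * ((j:ℝ)+(e:ℝ)+1+1)^(j+e+1+1) < ((j:ℝ)+1)^(j+1) * ((j:ℝ)+(e:ℝ)+1)^(j+e+1+1) := by
    have h := main_ineq j hj (j+e+1) (by omega)
    push_cast at h
    exact h
  have hP : (0:ℝ) < C * ((e:ℝ)+1)^(e+2) := by positivity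
  calc C * ((e:ℝ)+1)^(e+2) * (j:ℝ)^(j+1) * ((j:ℝ)+e+2)^(j+e+2)
      = (C * ((e:ℝ)+1)^(e+2)) * ((j:ℝ)^(j+1) * ((j:ℝ)+(e:ℝ)+1+1)^(j+e+1+1)) := by ring
    _ < (C * ((e:ℝ)+1)^(e+2)) * (((j:ℝ)+1)^(j+1) * ((j:ℝ)+(e:ℝ)+1)^(j+e+1+1)) :=
        mul_lt_mul_of_pos_left key hP
    _ = C * ((e:ℝ)+1)^(e+2) * ((j:ℝ)+1)^(j+1) * ((j:ℝ)+e+1)^(j+e+2) := by ring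
end

section
/- Define α(k,n) = k · C(n,k) · (1−k/n)^{n+1−k} · (k/n)^k. For all n ≥ 3 and 1 ≤ k ≤ n−2, α(k,n) > α(k,n−1). -/
set_option maxHeartbeats 1000000


theorem stmt7 (n k : ℕ) (hn : 3 ≤ n) (hk : 1 ≤ k) (hk2 : k ≤ n - 2) :
    (k : ℝ) * (((n-1).choose k : ℕ) : ℝ)
        * (1 - (k:ℝ)/((n:ℝ)-1))^((n-1)+1-k) * ((k:ℝ)/((n:ℝ)-1))^k
    < (k : ℝ) * ((n.choose k : ℕ) : ℝ) * (1 - (k:ℝ)/n)^(n+1-k) * ((k:ℝ)/n)^k := by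
  have hkn' : k + 2 ≤ n := by omega
  set N : ℝ := (n : ℝ) with hNdef
  set K : ℝ := (k : ℝ) with hKdef
  have hN3 : (3:ℝ) ≤ N := by rw [hNdef]; exact_mod_cast hn
  have hK1 : (1:ℝ) ≤ K := by rw [hKdef]; exact_mod_cast hk
  have hKN : K + 2 ≤ N := by rw [hKdef, hNdef]; exact_mod_cast hkn'
  have hK0 : (0:ℝ) < K := by linarith
  have hN0 : (0:ℝ) < N := by linarith
  have hN1 : (0:ℝ) < N - 1 := by linarith
  have hx0 : (0:ℝ) < 1 - K/(N-1) := by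
    rw [sub_pos, div_lt_one hN1]; linarith
  have hy0 : (0:ℝ) < 1 - K/N := by
    rw [sub_pos, div_lt_one hN0]; linarith
  have hu0 : (0:ℝ) < K/(N-1) := by positivity
  have hv0 : (0:ℝ) < K/N := by positivity
  have he1 : (n-1)+1-k = n-k := by omega
  have he2 : n+1-k = (n-k)+1 := by omega
  rw [he1, he2]
  set e := n - k with hedef
  have heR : (e:ℝ) = N - K := by
    rw [hedef, hNdef, hKdef]; push_cast [Nat.cast_sub (by omega : k ≤ n)]; ring
  have he0 : (0:ℝ) < (e:ℝ) := by rw [heR]; linarith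
  have hA0 : 0 < n.choose k := Nat.choose_pos (by omega)
  have hB0 : 0 < (n-1).choose k := Nat.choose_pos (by omega)
  set A : ℝ := ((n.choose k : ℕ) : ℝ) with hAdef
  set B : ℝ := (((n-1).choose k : ℕ) : ℝ) with hBdef
  have hA0' : (0:ℝ) < A := by rw [hAdef]; exact_mod_cast hA0
  have hB0' : (0:ℝ) < B := by rw [hBdef]; exact_mod_cast hB0
  have hchoose : B * N = A * (N - K) := by
    have h := Nat.choose_mul_succ_eq (n-1) k
    have h1 : n - 1 + 1 = n := by omega
    rw [h1] at h
    have h2 := congrArg (Nat.cast (R := ℝ)) h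
    push_cast [Nat.cast_sub (by omega : k ≤ n)] at h2
    rw [hAdef, hBdef, hNdef, hKdef]; push_cast; linarith
  have hBA : B = A * (1 - K/N) := by
    field_simp
    nlinarith [hchoose]
  -- key inequality 1 : k * (log u - log v) < K/(N-1)
  have key1 : K * Real.log (K/(N-1)) - K * Real.log (K/N) < K/(N-1) := by
    have hq : Real.log (K/(N-1)) - Real.log (K/N) = Real.log (N/(N-1)) := by
      rw [← Real.log_div (by positivity) (by positivity)]
      congr 1
      field_simp
    have h1 : Real.log (N/(N-1)) < N/(N-1) - 1 :=
      Real.log_lt_sub_one_of_pos (by positivity) (by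
        intro h
        rw [div_eq_one_iff_eq (by linarith : N - 1 ≠ 0)] at h
        linarith)
    have h2 : N/(N-1) - 1 = 1/(N-1) := by field_simp; ring
    have h3 : Real.log (N/(N-1)) < 1/(N-1) := h2 ▸ h1
    have : K * (Real.log (K/(N-1)) - Real.log (K/N)) < K * (1/(N-1)) := by
      rw [hq]; exact mul_lt_mul_of_pos_left h3 hK0
    have h4 : K * (1/(N-1)) = K/(N-1) := by ring
    linarith [this]
  -- key inequality 2 : K/(N-1) < e * (log y - log x)
  have key2 : K/(N-1) < (e:ℝ) * Real.log (1 - K/N) - (e:ℝ) * Real.log (1 - K/(N-1)) := by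
    set a : ℝ := ((N-K)*(N-1))/(N*(N-1-K)) with hadef
    have hden : (0:ℝ) < N*(N-1-K) := by nlinarith
    have ha1 : 1 < a := by
      rw [hadef, lt_div_iff₀ hden]
      nlinarith
    have ha0 : (0:ℝ) < a := by linarith
    have hNK0 : N - K ≠ 0 := by intro h; nlinarith
    have hN1' : N - 1 ≠ 0 := ne_of_gt hN1
    have hlogdiff : Real.log (1 - K/N) - Real.log (1 - K/(N-1)) = Real.log a := by
      rw [← Real.log_div (by positivity) (by positivity)]
      congr 1
      rw [hadef]
      field_simp
    -- log a > 1 - 1/a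
    have hinv : Real.log (1/a) < 1/a - 1 :=
      Real.log_lt_sub_one_of_pos (by positivity) (by
        intro h
        rw [div_eq_one_iff_eq (by linarith)] at h
        linarith)
    have hloginv : Real.log (1/a) = - Real.log a := by
      rw [one_div, Real.log_inv]
    have hlb : 1 - 1/a < Real.log a := by rw [hloginv] at hinv; linarith
    have hprod : (0:ℝ) < (N-K)*(N-1) := by nlinarith
    have hval : 1 - 1/a = K/((N-K)*(N-1)) := by
      rw [eq_div_iff (ne_of_gt hprod), hadef, one_div, inv_div]
      field_simp
      ring
    have hmul : (e:ℝ) * (K/((N-K)*(N-1))) = K/(N-1) := by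
      rw [heR]
      have : N - K ≠ 0 := by linarith
      field_simp
    have : (e:ℝ) * (1 - 1/a) < (e:ℝ) * Real.log a := mul_lt_mul_of_pos_left hlb he0
    rw [hval, hmul] at this
    have hexp : (e:ℝ) * (Real.log (1 - K/N) - Real.log (1 - K/(N-1))) = (e:ℝ) * Real.log a := by
      rw [hlogdiff]
    nlinarith [this]
  -- reduce the goal to logs
  rw [← Real.log_lt_log_iff (by positivity) (by positivity)]
  rw [Real.log_mul (by positivity) (by positivity),
      Real.log_mul (by positivity) (by positivity),
      Real.log_mul (by positivity) (by positivity),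
      Real.log_mul (by positivity) (by positivity),
      Real.log_mul (by positivity) (by positivity),
      Real.log_mul (by positivity) (by positivity),
      Real.log_pow, Real.log_pow, Real.log_pow, Real.log_pow]
  rw [hBA, Real.log_mul (by positivity) (by positivity)]
  push_cast
  nlinarith [key1, key2]
end

section
/- Let S be a finite set, x : S → [0,1], and for A ⊆ S let p_S(A) = ∏_{i∈A} x_i · ∏_{i∈S\A} (1−x_i). Define h_S^k(x) = ∑_{A⊆S, |A|=k} p_S(A)·(k − x(A)) and Q_S^k(x) = ∑_{A⊆S, |A|=k} p_S(A). Then for 1 ≤ k ≤ |S|, h_S^k(x) − h_S^{k−1}(x) = Q_S^{k−1}(x)·(x(S) − (k−1)). -/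
open Finset

theorem stmt9 {ι : Type*} [DecidableEq ι] (S : Finset ι) (x : ι → ℝ)
    (hx : ∀ i ∈ S, x i ∈ Set.Icc (0:ℝ) 1) (k : ℕ) (hk1 : 1 ≤ k) (hk2 : k ≤ S.card) :
    (∑ A ∈ S.powersetCard k,
        (∏ i ∈ A, x i) * (∏ i ∈ S \ A, (1 - x i)) * ((k:ℝ) - ∑ i ∈ A, x i))
    - (∑ A ∈ S.powersetCard (k-1),
        (∏ i ∈ A, x i) * (∏ i ∈ S \ A, (1 - x i)) * (((k:ℝ)-1) - ∑ i ∈ A, x i))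
    = (∑ A ∈ S.powersetCard (k-1), (∏ i ∈ A, x i) * (∏ i ∈ S \ A, (1 - x i)))
        * ((∑ i ∈ S, x i) - ((k:ℝ)-1)) := by
  set p : Finset ι → ℝ := fun A => (∏ i ∈ A, x i) * (∏ i ∈ S \ A, (1 - x i)) with hp
  -- key reindexing identity
  have key : (∑ A ∈ S.powersetCard k, ∑ i ∈ A, p A * (1 - x i))
      = ∑ B ∈ S.powersetCard (k-1), ∑ i ∈ S \ B, p B * (x i) := by
    rw [Finset.sum_sigma', Finset.sum_sigma']
    refine Finset.sum_bij' (fun a _ => ⟨a.1.erase a.2, a.2⟩)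
      (fun b _ => ⟨insert b.2 b.1, b.2⟩) ?_ ?_ ?_ ?_ ?_
    · rintro ⟨A, i⟩ h
      simp only [Finset.mem_sigma, Finset.mem_powersetCard] at h ⊢
      obtain ⟨⟨hAS, hAc⟩, hi⟩ := h
      refine ⟨⟨(A.erase i).subset_of_eq rfl |>.trans ((Finset.erase_subset i A).trans hAS),
        ?_⟩, ?_⟩
      · rw [Finset.card_erase_of_mem hi, hAc]
      · simp [hAS hi, hi]
    · rintro ⟨B, i⟩ h
      simp only [Finset.mem_sigma, Finset.mem_powersetCard, Finset.mem_sdiff] at h ⊢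
      obtain ⟨⟨hBS, hBc⟩, hiS, hiB⟩ := h
      refine ⟨⟨Finset.insert_subset hiS hBS, ?_⟩, Finset.mem_insert_self _ _⟩
      rw [Finset.card_insert_of_notMem hiB, hBc, Nat.sub_add_cancel hk1]
    · rintro ⟨A, i⟩ h
      simp only [Finset.mem_sigma, Finset.mem_powersetCard] at h
      simp [Finset.insert_erase h.2]
    · rintro ⟨B, i⟩ h
      simp only [Finset.mem_sigma, Finset.mem_powersetCard, Finset.mem_sdiff] at h
      simp [Finset.erase_insert h.2.2]
    · rintro ⟨A, i⟩ h
      simp only [Finset.mem_sigma, Finset.mem_powersetCard] at h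
      obtain ⟨⟨hAS, hAc⟩, hi⟩ := h
      have hiS : i ∈ S := hAS hi
      have hsd : S \ A.erase i = insert i (S \ A) := by
        ext j
        simp only [Finset.mem_sdiff, Finset.mem_erase, Finset.mem_insert]
        constructor
        · rintro ⟨hjS, hj⟩
          by_cases hji : j = i
          · exact Or.inl hji
          · exact Or.inr ⟨hjS, fun hjA => hj ⟨hji, hjA⟩⟩
        · rintro (rfl | ⟨hjS, hjA⟩)
          · exact ⟨hiS, fun hc => hc.1 rfl⟩
          · exact ⟨hjS, fun hc => hjA hc.2⟩
      have h1 : ∏ j ∈ A, x j = x i * ∏ j ∈ A.erase i, x j :=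
        (Finset.mul_prod_erase A x hi).symm
      have h2 : ∏ j ∈ S \ A.erase i, (1 - x j) = (1 - x i) * ∏ j ∈ S \ A, (1 - x j) := by
        rw [hsd, Finset.prod_insert (by simp [hi])]
      simp only [hp, h1, h2]
      ring
  have hkey' : (∑ A ∈ S.powersetCard k, p A * ((k:ℝ) - ∑ i ∈ A, x i))
      = ∑ B ∈ S.powersetCard (k-1), p B * ((∑ i ∈ S, x i) - ∑ i ∈ B, x i) := by
    calc (∑ A ∈ S.powersetCard k, p A * ((k:ℝ) - ∑ i ∈ A, x i))
        = ∑ A ∈ S.powersetCard k, ∑ i ∈ A, p A * (1 - x i) := by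
          refine Finset.sum_congr rfl fun A hA => ?_
          rw [Finset.mem_powersetCard] at hA
          rw [← Finset.mul_sum, Finset.sum_sub_distrib, Finset.sum_const, hA.2]
          simp [mul_comm]
      _ = ∑ B ∈ S.powersetCard (k-1), ∑ i ∈ S \ B, p B * x i := key
      _ = ∑ B ∈ S.powersetCard (k-1), p B * ((∑ i ∈ S, x i) - ∑ i ∈ B, x i) := by
          refine Finset.sum_congr rfl fun B hB => ?_
          rw [Finset.mem_powersetCard] at hB
          rw [← Finset.mul_sum, Finset.sum_sdiff_eq_sub hB.1]
  rw [hkey', Finset.sum_mul, ← Finset.sum_sub_distrib]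
  refine Finset.sum_congr rfl fun B _ => ?_
  simp only [hp]
  ring
end

section
/- Let S be a finite set, x : S → [0,1], p_S(A) = ∏_{i∈A} x_i · ∏_{i∈S\A} (1−x_i), h_S^k(x) = ∑_{A⊆S,|A|=k} p_S(A)·(k − x(A)), and Q_S^i(x) = ∑_{A⊆S,|A|=i} p_S(A). Then for 0 ≤ k ≤ |S|, h_S^k(x) = ∑_{i=0}^{k−1} Q_S^i(x)·(x(S) − i). -/
open Finset

private lemma swap10 {ι : Type*} [DecidableEq ι] (S : Finset ι) (x : ι → ℝ) (k : ℕ) :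
    ∑ B ∈ S.powersetCard (k+1), ∑ i ∈ B,
        (∏ j ∈ B, x j) * (∏ j ∈ S \ B, (1 - x j)) * (1 - x i)
    = ∑ A ∈ S.powersetCard k, ∑ i ∈ S \ A,
        (∏ j ∈ A, x j) * (∏ j ∈ S \ A, (1 - x j)) * x i := by
  rw [Finset.sum_sigma', Finset.sum_sigma']
  refine Finset.sum_nbij' (fun p => ⟨p.1.erase p.2, p.2⟩)
    (fun p => ⟨insert p.2 p.1, p.2⟩) ?_ ?_ ?_ ?_ ?_
  · rintro ⟨B, i⟩ hBi
    simp only [Finset.mem_sigma, mem_powersetCard] at hBi ⊢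
    obtain ⟨⟨hBS, hBc⟩, hiB⟩ := hBi
    refine ⟨⟨(Finset.erase_subset _ _).trans hBS, ?_⟩, ?_⟩
    · rw [Finset.card_erase_of_mem hiB, hBc]; omega
    · simp [Finset.mem_sdiff, hBS hiB]
  · rintro ⟨A, i⟩ hAi
    simp only [Finset.mem_sigma, mem_powersetCard, Finset.mem_sdiff] at hAi ⊢
    obtain ⟨⟨hAS, hAc⟩, hiS, hiA⟩ := hAi
    exact ⟨⟨Finset.insert_subset hiS hAS, by rw [Finset.card_insert_of_notMem hiA, hAc]⟩,
      Finset.mem_insert_self _ _⟩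
  · rintro ⟨B, i⟩ hBi
    simp only [Finset.mem_sigma, mem_powersetCard] at hBi
    simp [Finset.insert_erase hBi.2]
  · rintro ⟨A, i⟩ hAi
    simp only [Finset.mem_sigma, mem_powersetCard, Finset.mem_sdiff] at hAi
    simp [Finset.erase_insert hAi.2.2]
  · rintro ⟨B, i⟩ hBi
    simp only [Finset.mem_sigma, mem_powersetCard] at hBi
    obtain ⟨⟨hBS, hBc⟩, hiB⟩ := hBi
    have h1 : ∏ j ∈ B, x j = x i * ∏ j ∈ B.erase i, x j :=
      (Finset.mul_prod_erase B x hiB).symm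
    have h2 : S \ B.erase i = insert i (S \ B) := Finset.sdiff_erase (hBS hiB)
    have h3 : i ∉ S \ B := by simp [hiB]
    dsimp only
    rw [h1, h2, Finset.prod_insert h3]
    ring

private lemma key10 {ι : Type*} [DecidableEq ι] (S : Finset ι) (x : ι → ℝ) (k : ℕ) :
    ∑ B ∈ S.powersetCard (k+1),
        (∏ i ∈ B, x i) * (∏ i ∈ S \ B, (1 - x i)) * (((k:ℝ)+1) - ∑ i ∈ B, x i)
    = ∑ A ∈ S.powersetCard k,
        (∏ i ∈ A, x i) * (∏ i ∈ S \ A, (1 - x i)) * ((k:ℝ) - ∑ i ∈ A, x i)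
      + (∑ A ∈ S.powersetCard k, (∏ j ∈ A, x j) * (∏ j ∈ S \ A, (1 - x j)))
          * ((∑ j ∈ S, x j) - k) := by
  have hL : ∑ B ∈ S.powersetCard (k+1),
      (∏ i ∈ B, x i) * (∏ i ∈ S \ B, (1 - x i)) * (((k:ℝ)+1) - ∑ i ∈ B, x i)
      = ∑ B ∈ S.powersetCard (k+1), ∑ i ∈ B,
          (∏ j ∈ B, x j) * (∏ j ∈ S \ B, (1 - x j)) * (1 - x i) := by
    refine Finset.sum_congr rfl fun B hB => ?_
    rw [mem_powersetCard] at hB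
    rw [← Finset.mul_sum, Finset.sum_sub_distrib, Finset.sum_const, hB.2]
    push_cast
    ring
  have hR : ∑ A ∈ S.powersetCard k, ∑ i ∈ S \ A,
        (∏ j ∈ A, x j) * (∏ j ∈ S \ A, (1 - x j)) * x i
      = ∑ A ∈ S.powersetCard k,
          (∏ j ∈ A, x j) * (∏ j ∈ S \ A, (1 - x j))
            * ((∑ j ∈ S, x j) - ∑ j ∈ A, x j) := by
    refine Finset.sum_congr rfl fun A hA => ?_
    rw [mem_powersetCard] at hA
    rw [← Finset.mul_sum, Finset.sum_sdiff_eq_sub hA.1]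
  rw [hL, swap10, hR, Finset.sum_mul, ← Finset.sum_add_distrib]
  exact Finset.sum_congr rfl fun A hA => by ring

theorem stmt10 {ι : Type*} [DecidableEq ι] (S : Finset ι) (x : ι → ℝ)
    (hx : ∀ i ∈ S, x i ∈ Set.Icc (0:ℝ) 1) (k : ℕ) (hk : k ≤ S.card) :
    ∑ A ∈ S.powersetCard k,
        (∏ i ∈ A, x i) * (∏ i ∈ S \ A, (1 - x i)) * ((k:ℝ) - ∑ i ∈ A, x i)
    = ∑ i ∈ Finset.range k,
        (∑ A ∈ S.powersetCard i, (∏ j ∈ A, x j) * (∏ j ∈ S \ A, (1 - x j)))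
          * ((∑ j ∈ S, x j) - (i:ℝ)) := by
  clear hk
  induction k with
  | zero => simp
  | succ k ih =>
    rw [Finset.sum_range_succ, ← ih]
    have := key10 S x k
    push_cast
    convert this using 2
end

section
/- Let S be a finite set with |S| = n−1 and 1 ≤ k ≤ n−1. For every i ∈ S and x ∈ [0,1]^S, the partial derivative of h_S^k with respect to x_i equals Q_{S\{i\}}^{k−1}(x) · (k − x(S) − x_i), where Q_T^j(x) = ∑_{A⊆T,|A|=j} p_T(A). -/
open Finset

lemma aux_term {ι : Type*} [DecidableEq ι] (x : ι → ℝ) {T B : Finset ι} {j : ι}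
    (hj : j ∈ T) (hjB : j ∉ B) :
    ((∏ l ∈ B, x l) * ∏ l ∈ T \ B, (1 - x l)) * x j
      = ((∏ l ∈ insert j B, x l) * ∏ l ∈ T \ insert j B, (1 - x l)) * (1 - x j) := by
  have hmem : j ∈ T \ B := by simp [hj, hjB]
  have herase : (T \ B).erase j = T \ insert j B := by
    ext l; simp only [mem_erase, mem_sdiff, mem_insert]; tauto
  rw [← Finset.insert_erase hmem, Finset.prod_insert (Finset.notMem_erase _ _), herase,
    Finset.prod_insert hjB]
  ring

lemma key_identity {ι : Type*} [DecidableEq ι] (x : ι → ℝ) (T : Finset ι) (m : ℕ) :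
    ∑ B ∈ T.powersetCard m,
        ((∏ l ∈ B, x l) * ∏ l ∈ T \ B, (1 - x l)) * (∑ j ∈ T \ B, x j)
      = ∑ A ∈ T.powersetCard (m+1),
        ((∏ l ∈ A, x l) * ∏ l ∈ T \ A, (1 - x l)) * (∑ j ∈ A, (1 - x j)) := by
  simp only [Finset.mul_sum]
  rw [Finset.sum_sigma', Finset.sum_sigma']
  refine Finset.sum_bij' (fun a ha => ⟨insert a.2 a.1, a.2⟩)
    (fun a ha => ⟨a.1.erase a.2, a.2⟩) ?_ ?_ ?_ ?_ ?_
  · rintro ⟨B, j⟩ h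
    simp only [Finset.mem_sigma, Finset.mem_powersetCard, Finset.mem_sdiff] at h ⊢
    obtain ⟨⟨hBT, hcard⟩, hjT, hjB⟩ := h
    refine ⟨⟨?_, ?_⟩, Finset.mem_insert_self _ _⟩
    · exact Finset.insert_subset hjT hBT
    · rw [Finset.card_insert_of_notMem hjB, hcard]
  · rintro ⟨A, j⟩ h
    simp only [Finset.mem_sigma, Finset.mem_powersetCard, Finset.mem_sdiff] at h ⊢
    obtain ⟨⟨hAT, hcard⟩, hjA⟩ := h
    refine ⟨⟨(Finset.erase_subset _ _).trans hAT, ?_⟩, hAT hjA, Finset.notMem_erase _ _⟩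
    rw [Finset.card_erase_of_mem hjA, hcard]; rfl
  · rintro ⟨B, j⟩ h
    simp only [Finset.mem_sigma, Finset.mem_powersetCard, Finset.mem_sdiff] at h
    simp [Finset.erase_insert_of_ne, Finset.erase_insert h.2.2]
  · rintro ⟨A, j⟩ h
    simp only [Finset.mem_sigma, Finset.mem_powersetCard, Finset.mem_sdiff] at h
    simp [Finset.insert_erase h.2]
  · rintro ⟨B, j⟩ h
    simp only [Finset.mem_sigma, Finset.mem_powersetCard, Finset.mem_sdiff] at h
    exact aux_term x h.2.1 h.2.2


theorem stmt15 {ι : Type*} [DecidableEq ι] (S : Finset ι) (n k : ℕ)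
    (hS : S.card = n - 1) (hk1 : 1 ≤ k) (hk2 : k ≤ n - 1)
    (i : ι) (hi : i ∈ S) (x : ι → ℝ) (hx : ∀ j ∈ S, x j ∈ Set.Icc (0:ℝ) 1) :
    HasDerivAt (fun t : ℝ =>
      ∑ A ∈ S.powersetCard k,
        (∏ j ∈ A, Function.update x i t j)
          * (∏ j ∈ S \ A, (1 - Function.update x i t j))
          * ((k:ℝ) - ∑ j ∈ A, Function.update x i t j))
      ((∑ A ∈ (S.erase i).powersetCard (k-1),
          (∏ j ∈ A, x j) * (∏ j ∈ (S.erase i) \ A, (1 - x j)))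
        * ((k:ℝ) - (∑ j ∈ S, x j) - x i))
      (x i) := by
  classical
  obtain ⟨m, rfl⟩ : ∃ m, k = m + 1 := ⟨k - 1, (Nat.succ_pred_eq_of_pos hk1).symm⟩
  set T := S.erase i with hT
  have hiT : i ∉ T := Finset.notMem_erase _ _
  have hST : S = insert i T := (Finset.insert_erase hi).symm
  set d : Finset ι → ℝ := fun A =>
    if i ∈ A then
      ((∏ j ∈ A.erase i, x j) * ∏ j ∈ S \ A, (1 - x j))
        * (((m:ℝ)+1) - (∑ j ∈ A.erase i, x j) - 2 * x i)
    else
      -(((∏ j ∈ A, x j) * ∏ j ∈ (S \ A).erase i, (1 - x j))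
        * (((m:ℝ)+1) - ∑ j ∈ A, x j)) with hd
  have hderiv : HasDerivAt (fun t : ℝ =>
      ∑ A ∈ S.powersetCard (m+1),
        (∏ j ∈ A, Function.update x i t j)
          * (∏ j ∈ S \ A, (1 - Function.update x i t j))
          * ((↑(m+1):ℝ) - ∑ j ∈ A, Function.update x i t j))
      (∑ A ∈ S.powersetCard (m+1), d A) (x i) := by
    apply HasDerivAt.fun_sum
    intro A hA
    have hAS : A ⊆ S := (Finset.mem_powersetCard.mp hA).1
    by_cases hiA : i ∈ A
    · have hfun : ∀ t : ℝ,
          (∏ j ∈ A, Function.update x i t j)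
            * (∏ j ∈ S \ A, (1 - Function.update x i t j))
            * ((↑(m+1):ℝ) - ∑ j ∈ A, Function.update x i t j)
          = ((t * ∏ j ∈ A.erase i, x j) * ∏ j ∈ S \ A, (1 - x j))
            * (((m:ℝ)+1) - (t + ∑ j ∈ A.erase i, x j)) := by
        intro t
        have h1 : ∏ j ∈ A, Function.update x i t j = t * ∏ j ∈ A.erase i, x j := by
          rw [← Finset.mul_prod_erase A (Function.update x i t) hiA, Function.update_self]
          congr 1
          exact Finset.prod_congr rfl fun j hj =>
            Function.update_of_ne (Finset.ne_of_mem_erase hj) _ _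
        have h2 : ∑ j ∈ A, Function.update x i t j = t + ∑ j ∈ A.erase i, x j := by
          rw [← Finset.add_sum_erase A (Function.update x i t) hiA, Function.update_self]
          congr 1
          exact Finset.sum_congr rfl fun j hj =>
            Function.update_of_ne (Finset.ne_of_mem_erase hj) _ _
        have h3 : ∏ j ∈ S \ A, (1 - Function.update x i t j)
            = ∏ j ∈ S \ A, (1 - x j) := by
          refine Finset.prod_congr rfl fun j hj => ?_
          rw [Function.update_of_ne (ne_of_mem_of_not_mem hj (by simp [hiA]) :
            j ≠ i)]
        rw [h1, h2, h3]
        push_cast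
        ring
      simp only [hfun]
      have hD := (((hasDerivAt_id (x i)).mul_const (∏ j ∈ A.erase i, x j)).mul_const
          (∏ j ∈ S \ A, (1 - x j))).mul
        (((hasDerivAt_id (x i)).add_const (∑ j ∈ A.erase i, x j)).const_sub ((m:ℝ)+1))
      simp only [id_eq, one_mul] at hD
      refine hD.congr_deriv ?_
      simp only [hd, if_pos hiA]
      ring
    · have hiSA : i ∈ S \ A := Finset.mem_sdiff.mpr ⟨hi, hiA⟩
      have hfun : ∀ t : ℝ,
          (∏ j ∈ A, Function.update x i t j)
            * (∏ j ∈ S \ A, (1 - Function.update x i t j))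
            * ((↑(m+1):ℝ) - ∑ j ∈ A, Function.update x i t j)
          = ((∏ j ∈ A, x j) * ((1 - t) * ∏ j ∈ (S \ A).erase i, (1 - x j)))
            * (((m:ℝ)+1) - ∑ j ∈ A, x j) := by
        intro t
        have h1 : ∏ j ∈ A, Function.update x i t j = ∏ j ∈ A, x j :=
          Finset.prod_congr rfl fun j hj =>
            Function.update_of_ne (ne_of_mem_of_not_mem hj hiA) _ _
        have h2 : ∑ j ∈ A, Function.update x i t j = ∑ j ∈ A, x j :=
          Finset.sum_congr rfl fun j hj =>
            Function.update_of_ne (ne_of_mem_of_not_mem hj hiA) _ _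
        have h3 : ∏ j ∈ S \ A, (1 - Function.update x i t j)
            = (1 - t) * ∏ j ∈ (S \ A).erase i, (1 - x j) := by
          rw [← Finset.mul_prod_erase (S \ A) (fun j => 1 - Function.update x i t j) hiSA,
            Function.update_self]
          congr 1
          exact Finset.prod_congr rfl fun j hj => by
            rw [Function.update_of_ne (Finset.ne_of_mem_erase hj)]
        rw [h1, h2, h3]
        push_cast
        ring
      simp only [hfun]
      have hD := ((((hasDerivAt_id (x i)).const_sub 1).mul_const
          (∏ j ∈ (S \ A).erase i, (1 - x j))).const_mul (∏ j ∈ A, x j)).mul_const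
          (((m:ℝ)+1) - ∑ j ∈ A, x j)
      simp only [id_eq] at hD
      refine hD.congr_deriv ?_
      simp only [hd, if_neg hiA]
      ring
  suffices hsum : ∑ A ∈ S.powersetCard (m+1), d A
      = (∑ A ∈ T.powersetCard (m+1-1),
          (∏ j ∈ A, x j) * (∏ j ∈ T \ A, (1 - x j)))
        * ((↑(m+1):ℝ) - (∑ j ∈ S, x j) - x i) by
    rw [← hsum]
    exact hderiv
  simp only [Nat.add_sub_cancel]
  have hdisj : Disjoint (T.powersetCard (m+1)) ((T.powersetCard m).image (insert i)) := by
    rw [Finset.disjoint_left]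
    intro A hA hA'
    obtain ⟨B, hB, rfl⟩ := Finset.mem_image.mp hA'
    exact hiT ((Finset.mem_powersetCard.mp hA).1 (Finset.mem_insert_self _ _))
  have hinj : ∀ B ∈ T.powersetCard m, ∀ B' ∈ T.powersetCard m,
      insert i B = insert i B' → B = B' := by
    intro B hB B' hB' h
    have hiB : i ∉ B := fun h' => hiT ((Finset.mem_powersetCard.mp hB).1 h')
    have hiB' : i ∉ B' := fun h' => hiT ((Finset.mem_powersetCard.mp hB').1 h')
    rw [← Finset.erase_insert hiB, ← Finset.erase_insert hiB', h]
  have hsplit : S.powersetCard (m+1)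
      = T.powersetCard (m+1) ∪ (T.powersetCard m).image (insert i) := by
    rw [hST]
    exact Finset.powersetCard_succ_insert hiT m
  rw [hsplit, Finset.sum_union hdisj, Finset.sum_image hinj]
  have e1 : ∀ A ∈ T.powersetCard (m+1), d A
      = -(((∏ j ∈ A, x j) * ∏ j ∈ T \ A, (1 - x j)) * (((m:ℝ)+1) - ∑ j ∈ A, x j)) := by
    intro A hA
    have hAT : A ⊆ T := (Finset.mem_powersetCard.mp hA).1
    have hiA : i ∉ A := fun h => hiT (hAT h)
    have hTe : (S \ A).erase i = T \ A := by
      ext l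
      simp only [Finset.mem_erase, Finset.mem_sdiff, hT]
      tauto
    rw [hd]
    simp only [if_neg hiA, hTe]
  have e2 : ∀ B ∈ T.powersetCard m, d (insert i B)
      = ((∏ j ∈ B, x j) * ∏ j ∈ T \ B, (1 - x j))
        * (((m:ℝ)+1) - (∑ j ∈ B, x j) - 2 * x i) := by
    intro B hB
    have hBT : B ⊆ T := (Finset.mem_powersetCard.mp hB).1
    have hiB : i ∉ B := fun h => hiT (hBT h)
    have hSd : S \ insert i B = T \ B := by
      ext l
      simp only [Finset.mem_sdiff, Finset.mem_insert, hT, Finset.mem_erase]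
      constructor
      · rintro ⟨hlS, hl⟩
        push_neg at hl
        exact ⟨⟨hl.1, hlS⟩, hl.2⟩
      · rintro ⟨⟨hli, hlS⟩, hlB⟩
        exact ⟨hlS, by push_neg; exact ⟨hli, hlB⟩⟩
    rw [hd]
    simp only [if_pos (Finset.mem_insert_self i B), Finset.erase_insert hiB, hSd]
  rw [Finset.sum_congr rfl e1, Finset.sum_congr rfl e2]
  have hxS : ∑ j ∈ S, x j = x i + ∑ j ∈ T, x j := by
    rw [hST, Finset.sum_insert hiT]
  have key := key_identity x T m
  have hL : ∀ B ∈ T.powersetCard m,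
      ((∏ l ∈ B, x l) * ∏ l ∈ T \ B, (1 - x l)) * (∑ j ∈ T \ B, x j)
      = ((∏ l ∈ B, x l) * ∏ l ∈ T \ B, (1 - x l)) * ((∑ j ∈ T, x j) - ∑ j ∈ B, x j) := by
    intro B hB
    rw [Finset.sum_sdiff_eq_sub (Finset.mem_powersetCard.mp hB).1]
  have hR : ∀ A ∈ T.powersetCard (m+1),
      ((∏ l ∈ A, x l) * ∏ l ∈ T \ A, (1 - x l)) * (∑ j ∈ A, (1 - x j))
      = ((∏ l ∈ A, x l) * ∏ l ∈ T \ A, (1 - x l)) * (((m:ℝ)+1) - ∑ j ∈ A, x j) := by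
    intro A hA
    rw [Finset.sum_sub_distrib, Finset.sum_const, (Finset.mem_powersetCard.mp hA).2]
    push_cast
    ring_nf
  rw [Finset.sum_congr rfl hL, Finset.sum_congr rfl hR] at key
  have expand : ∑ B ∈ T.powersetCard m,
      ((∏ j ∈ B, x j) * ∏ j ∈ T \ B, (1 - x j))
        * (((m:ℝ)+1) - (∑ j ∈ B, x j) - 2 * x i)
      = (∑ B ∈ T.powersetCard m,
          ((∏ l ∈ B, x l) * ∏ l ∈ T \ B, (1 - x l))
            * ((∑ j ∈ T, x j) - ∑ j ∈ B, x j))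
        + (∑ B ∈ T.powersetCard m,
            (∏ j ∈ B, x j) * ∏ j ∈ T \ B, (1 - x j))
          * (((m:ℝ)+1) - 2 * x i - ∑ j ∈ T, x j) := by
    rw [Finset.sum_mul, ← Finset.sum_add_distrib]
    exact Finset.sum_congr rfl fun B _ => by ring
  rw [expand, key, Finset.sum_neg_distrib, hxS]
  push_cast
  ring
end

section
/- For n ≥ 2 and 1 ≤ k ≤ n−1, the function h_S^k on [0,1]^S with |S| = n−1 attains its maximum at the point (k/n, …, k/n), with maximum value k·C(n,k)·(1−k/n)^{n+1−k}·(k/n)^k. -/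
set_option maxHeartbeats 1000000

open Finset

namespace Stmt17

variable {ι : Type*} [DecidableEq ι]

noncomputable def hf (x : ι → ℝ) (S : Finset ι) (k : ℕ) : ℝ :=
  ∑ A ∈ S.powersetCard k,
    (∏ i ∈ A, x i) * (∏ i ∈ S \ A, (1 - x i)) * ((k : ℝ) - ∑ i ∈ A, x i)

noncomputable def pf (x : ι → ℝ) (S : Finset ι) (k : ℕ) : ℝ :=
  ∑ A ∈ S.powersetCard k, (∏ i ∈ A, x i) * (∏ i ∈ S \ A, (1 - x i))

lemma hf_congr {x y : ι → ℝ} {S : Finset ι} {k : ℕ} (h : ∀ i ∈ S, x i = y i) :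
    hf x S k = hf y S k := by
  refine Finset.sum_congr rfl fun A hA => ?_
  obtain ⟨hAS, -⟩ := Finset.mem_powersetCard.1 hA
  have h1 : ∏ i ∈ A, x i = ∏ i ∈ A, y i := Finset.prod_congr rfl fun i hi => h i (hAS hi)
  have h2 : ∏ i ∈ S \ A, (1 - x i) = ∏ i ∈ S \ A, (1 - y i) :=
    Finset.prod_congr rfl fun i hi => by rw [h i (Finset.mem_sdiff.1 hi).1]
  have h3 : ∑ i ∈ A, x i = ∑ i ∈ A, y i := Finset.sum_congr rfl fun i hi => h i (hAS hi)
  rw [h1, h2, h3]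

lemma pf_congr {x y : ι → ℝ} {S : Finset ι} {k : ℕ} (h : ∀ i ∈ S, x i = y i) :
    pf x S k = pf y S k := by
  refine Finset.sum_congr rfl fun A hA => ?_
  obtain ⟨hAS, -⟩ := Finset.mem_powersetCard.1 hA
  have h1 : ∏ i ∈ A, x i = ∏ i ∈ A, y i := Finset.prod_congr rfl fun i hi => h i (hAS hi)
  have h2 : ∏ i ∈ S \ A, (1 - x i) = ∏ i ∈ S \ A, (1 - y i) :=
    Finset.prod_congr rfl fun i hi => by rw [h i (Finset.mem_sdiff.1 hi).1]
  rw [h1, h2]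

lemma hf_zero (x : ι → ℝ) (S : Finset ι) : hf x S 0 = 0 := by
  simp [hf]

lemma hf_of_card_lt {x : ι → ℝ} {S : Finset ι} {k : ℕ} (h : S.card < k) : hf x S k = 0 := by
  rw [hf, Finset.powersetCard_eq_empty.2 h, Finset.sum_empty]

lemma pf_zero (x : ι → ℝ) (S : Finset ι) : pf x S 0 = ∏ i ∈ S, (1 - x i) := by
  simp [pf]

/-- Splitting a sum over `powersetCard` at an element `i ∈ S`. -/
lemma sum_powersetCard_split (f : Finset ι → ℝ) {S : Finset ι} {i : ι} (hi : i ∈ S) (k : ℕ) :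
    ∑ A ∈ S.powersetCard (k + 1), f A
      = ∑ A ∈ (S.erase i).powersetCard (k + 1), f A
        + ∑ A ∈ (S.erase i).powersetCard k, f (insert i A) := by
  conv_lhs => rw [← Finset.insert_erase hi]
  rw [Finset.powersetCard_succ_insert (Finset.notMem_erase i S)]
  rw [Finset.sum_union, Finset.sum_image]
  · intro A hA B hB hAB
    have hAi : i ∉ A := fun h => (Finset.notMem_erase i S)
      ((Finset.mem_powersetCard.1 hA).1 h)
    have hBi : i ∉ B := fun h => (Finset.notMem_erase i S)
      ((Finset.mem_powersetCard.1 hB).1 h)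
    exact (Finset.insert_erase_invOn.2.injOn (by simpa using hAi) (by simpa using hBi)) hAB
  · rw [Finset.disjoint_left]
    intro A hA hA'
    obtain ⟨B, hB, rfl⟩ := Finset.mem_image.1 hA'
    exact (Finset.notMem_erase i S) ((Finset.mem_powersetCard.1 hA).1 (Finset.mem_insert_self i B))

lemma prod_sdiff_erase {x : ι → ℝ} {S A : Finset ι} {i : ι} (hi : i ∈ S) (hA : A ⊆ S.erase i) :
    ∏ j ∈ S \ A, (1 - x j) = (1 - x i) * ∏ j ∈ (S.erase i) \ A, (1 - x j) := by
  have h1 : S \ A = insert i ((S.erase i) \ A) := by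
    ext a
    simp only [Finset.mem_sdiff, Finset.mem_insert, Finset.mem_erase]
    constructor
    · rintro ⟨haS, haA⟩
      by_cases hai : a = i
      · exact Or.inl hai
      · exact Or.inr ⟨⟨hai, haS⟩, haA⟩
    · rintro (rfl | ⟨⟨-, haS⟩, haA⟩)
      · exact ⟨hi, fun h => Finset.notMem_erase a S (hA h)⟩
      · exact ⟨haS, haA⟩
  rw [h1, Finset.prod_insert (by simp)]

lemma sdiff_insert_of_subset_erase {S A : Finset ι} {i : ι} (hi : i ∈ S) (hA : A ⊆ S.erase i) :
    S \ insert i A = (S.erase i) \ A := by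
  ext a
  simp only [Finset.mem_sdiff, Finset.mem_insert, Finset.mem_erase, not_or]
  tauto

/-- Single-variable recursion for `hf`. -/
lemma hf_erase (x : ι → ℝ) {S : Finset ι} {i : ι} (hi : i ∈ S) (k : ℕ) :
    hf x S (k + 1)
      = (1 - x i) * hf x (S.erase i) (k + 1)
        + x i * (hf x (S.erase i) k + (1 - x i) * pf x (S.erase i) k) := by
  have e1 : ∑ A ∈ (S.erase i).powersetCard (k + 1),
      (∏ j ∈ A, x j) * (∏ j ∈ S \ A, (1 - x j)) * (((k : ℝ) + 1) - ∑ j ∈ A, x j)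
      = (1 - x i) * hf x (S.erase i) (k + 1) := by
    rw [hf, Finset.mul_sum]
    refine Finset.sum_congr rfl fun A hA => ?_
    obtain ⟨hAS, -⟩ := Finset.mem_powersetCard.1 hA
    rw [prod_sdiff_erase hi hAS]
    push_cast
    ring
  have e2 : ∑ A ∈ (S.erase i).powersetCard k,
      (∏ j ∈ insert i A, x j) * (∏ j ∈ S \ insert i A, (1 - x j))
        * (((k : ℝ) + 1) - ∑ j ∈ insert i A, x j)
      = x i * (hf x (S.erase i) k + (1 - x i) * pf x (S.erase i) k) := by
    rw [hf, pf, mul_add, ← mul_assoc, Finset.mul_sum, Finset.mul_sum, ← Finset.sum_add_distrib]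
    refine Finset.sum_congr rfl fun A hA => ?_
    obtain ⟨hAS, -⟩ := Finset.mem_powersetCard.1 hA
    have hiA : i ∉ A := fun h => Finset.notMem_erase i S (hAS h)
    rw [Finset.prod_insert hiA, Finset.sum_insert hiA, sdiff_insert_of_subset_erase hi hAS]
    ring
  have := sum_powersetCard_split
    (fun A => (∏ j ∈ A, x j) * (∏ j ∈ S \ A, (1 - x j)) * (((k : ℝ) + 1) - ∑ j ∈ A, x j)) hi k
  rw [hf]
  push_cast
  rw [this, e1, e2]

/-- Single-variable recursion for `pf`. -/
lemma pf_erase (x : ι → ℝ) {S : Finset ι} {i : ι} (hi : i ∈ S) (k : ℕ) :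
    pf x S (k + 1)
      = (1 - x i) * pf x (S.erase i) (k + 1) + x i * pf x (S.erase i) k := by
  have e1 : ∑ A ∈ (S.erase i).powersetCard (k + 1),
      (∏ j ∈ A, x j) * (∏ j ∈ S \ A, (1 - x j)) = (1 - x i) * pf x (S.erase i) (k + 1) := by
    rw [pf, Finset.mul_sum]
    refine Finset.sum_congr rfl fun A hA => ?_
    obtain ⟨hAS, -⟩ := Finset.mem_powersetCard.1 hA
    rw [prod_sdiff_erase hi hAS]
    ring
  have e2 : ∑ A ∈ (S.erase i).powersetCard k,
      (∏ j ∈ insert i A, x j) * (∏ j ∈ S \ insert i A, (1 - x j))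
      = x i * pf x (S.erase i) k := by
    rw [pf, Finset.mul_sum]
    refine Finset.sum_congr rfl fun A hA => ?_
    obtain ⟨hAS, -⟩ := Finset.mem_powersetCard.1 hA
    have hiA : i ∉ A := fun h => Finset.notMem_erase i S (hAS h)
    rw [Finset.prod_insert hiA, sdiff_insert_of_subset_erase hi hAS]
    ring
  have := sum_powersetCard_split
    (fun A => (∏ j ∈ A, x j) * (∏ j ∈ S \ A, (1 - x j))) hi k
  rw [pf, this, e1, e2]

lemma pair_form (x : ι → ℝ) {S : Finset ι} {i j : ι} (hi : i ∈ S) (hj : j ∈ S)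
    (hij : i ≠ j) {k : ℕ} (hk : 1 ≤ k) :
    ∃ c0 c1 c2 c3 c4 : ℝ, ∀ u v : ℝ,
      hf (Function.update (Function.update x i u) j v) S k
        = c0 + c1 * (u + v) + c2 * (u + v) ^ 2 + (c3 + c4 * (u + v)) * (u * v) := by
  have hj' : j ∈ S.erase i := Finset.mem_erase.2 ⟨hij.symm, hj⟩
  set S' := S.erase i with hS'
  set S'' := S'.erase j with hS''
  have key : ∀ u v : ℝ,
      (Function.update (Function.update x i u) j v) i = u ∧
      (Function.update (Function.update x i u) j v) j = v ∧
      (∀ l ∈ S'', (Function.update (Function.update x i u) j v) l = x l) := by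
    intro u v
    refine ⟨?_, ?_, ?_⟩
    · rw [Function.update_of_ne hij, Function.update_self]
    · rw [Function.update_self]
    · intro l hl
      have hlj : l ≠ j := (Finset.mem_erase.1 hl).1
      have hli : l ≠ i := (Finset.mem_erase.1 (Finset.mem_erase.1 hl).2).1
      rw [Function.update_of_ne hlj, Function.update_of_ne hli]
  match k, hk with
  | 1, _ =>
    refine ⟨hf x S'' 1, pf x S'' 0 - hf x S'' 1, -(pf x S'' 0), hf x S'' 1, pf x S'' 0,
      fun u v => ?_⟩
    set y := Function.update (Function.update x i u) j v with hy
    have hyi : y i = u := (key u v).1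
    have hyj : y j = v := (key u v).2.1
    have hyS : ∀ l ∈ S'', y l = x l := (key u v).2.2
    have A := hf_erase y hi 0
    have D := hf_erase y hj' 0
    rw [← hS'] at A
    rw [← hS''] at D
    have C : pf y S' 0 = (1 - v) * pf x S'' 0 := by
      rw [pf_zero, ← Finset.mul_prod_erase _ _ hj', hyj, ← hS'', ← pf_zero,
        pf_congr hyS]
    norm_num at A D
    rw [A, hyi, D, hyj, C, hf_zero, hf_zero, pf_congr hyS, hf_congr hyS]
    ring
  | (l + 2), _ =>
    refine ⟨hf x S'' (l+2), pf x S'' (l+1) + hf x S'' (l+1) - hf x S'' (l+2),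
      -(pf x S'' (l+1)),
      hf x S'' (l+2) - 2 * hf x S'' (l+1) + hf x S'' l + 2 * pf x S'' l,
      pf x S'' (l+1) - pf x S'' l, fun u v => ?_⟩
    set y := Function.update (Function.update x i u) j v with hy
    have hyi : y i = u := (key u v).1
    have hyj : y j = v := (key u v).2.1
    have hyS : ∀ l ∈ S'', y l = x l := (key u v).2.2
    have A := hf_erase y hi (l+1)
    have B := hf_erase y hj' (l+1)
    have C := hf_erase y hj' l
    have D := pf_erase y hj' l
    rw [← hS'] at A
    rw [← hS''] at B C D
    rw [hf_congr hyS (k := l+2), hf_congr hyS (k := l+1), pf_congr hyS (k := l+1)] at B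
    rw [hf_congr hyS (k := l+1), hf_congr hyS (k := l), pf_congr hyS (k := l)] at C
    rw [pf_congr hyS (k := l+1), pf_congr hyS (k := l)] at D
    rw [show l+1+1 = l+2 from rfl] at A B
    rw [A, hyi, B, C, D, hyj]
    ring

lemma pow_succ_ge (a : ℕ) : ∀ n : ℕ, a ^ (n + 1) + (n + 1) * a ^ n ≤ (a + 1) ^ (n + 1) := by
  intro n
  induction n with
  | zero => simp
  | succ n ih =>
    have h : (a + 1) ^ (n + 2) = (a + 1) ^ (n + 1) * (a + 1) := by ring
    rw [h]
    calc a ^ (n + 2) + (n + 2) * a ^ (n + 1)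
        ≤ (a ^ (n + 1) + (n + 1) * a ^ n) * (a + 1) := by ring_nf; nlinarith [pow_nonneg (Nat.zero_le a) n]
      _ ≤ (a + 1) ^ (n + 1) * (a + 1) := Nat.mul_le_mul_right _ ih

lemma seq_step (t : ℕ) : t ^ (t + 1) * (t + 2) ^ (t + 2) ≤ (t + 1) ^ (t + 1) * (t + 1) ^ (t + 2) := by
  have ha : t * (t + 2) + 1 = (t + 1) ^ 2 := by ring
  have h1 : t ^ (t + 1) * (t + 2) ^ (t + 2) = (t + 2) * (t * (t + 2)) ^ (t + 1) := by
    rw [mul_pow]; ring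
  have h2 : (t + 1) ^ (t + 1) * (t + 1) ^ (t + 2) = (t + 1) * ((t + 1) ^ 2) ^ (t + 1) :=
    calc (t + 1) ^ (t + 1) * (t + 1) ^ (t + 2) = (t + 1) ^ (t + 1 + (t + 2)) := (pow_add _ _ _).symm
      _ = (t + 1) ^ (1 + 2 * (t + 1)) := by congr 1; omega
      _ = (t + 1) ^ 1 * ((t + 1) ^ 2) ^ (t + 1) := by rw [pow_add, pow_mul]
      _ = (t + 1) * ((t + 1) ^ 2) ^ (t + 1) := by rw [pow_one]
  rw [h1, h2, ← ha]
  calc (t + 2) * (t * (t + 2)) ^ (t + 1)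
      = (t + 1) * (t * (t + 2)) ^ (t + 1) + (t * (t + 2)) * (t * (t + 2)) ^ t := by ring
    _ ≤ (t + 1) * (t * (t + 2)) ^ (t + 1) + (t * (t + 2) + 1) * (t * (t + 2)) ^ t := by
        exact Nat.add_le_add_left (Nat.mul_le_mul_right _ (Nat.le_succ _)) _
    _ = (t + 1) * ((t * (t + 2)) ^ (t + 1) + (t + 1) * (t * (t + 2)) ^ t) := by
        rw [ha]; ring
    _ ≤ (t + 1) * (t * (t + 2) + 1) ^ (t + 1) := Nat.mul_le_mul_left _ (pow_succ_ge _ t)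

lemma seq_chain (p : ℕ) : ∀ q : ℕ,
    (p + 1) ^ (p + 2) * (p + q + 2) ^ (p + q + 2)
      ≤ (p + q + 1) ^ (p + q + 2) * (p + 2) ^ (p + 2) := by
  intro q
  induction q with
  | zero => simp [Nat.mul_comm]
  | succ q ih =>
    have hstep := seq_step (p + q + 1)
    rw [show p + q + 1 + 1 = p + q + 2 from rfl, show p + q + 1 + 2 = p + q + 3 from rfl] at hstep
    -- hstep : (p+q+1)^(p+q+2) * (p+q+3)^(p+q+3) ≤ (p+q+2)^(p+q+2) * (p+q+2)^(p+q+3)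
    rw [show p + (q + 1) + 2 = p + q + 3 from rfl, show p + (q + 1) + 1 = p + q + 2 from rfl]
    -- goal : (p+1)^(p+2) * (p+q+3)^(p+q+3) ≤ (p+q+2)^(p+q+3) * (p+2)^(p+2)
    have key : (p + q + 2) ^ (p + q + 2) * ((p + 1) ^ (p + 2) * (p + q + 3) ^ (p + q + 3))
        ≤ (p + q + 2) ^ (p + q + 2) * ((p + q + 2) ^ (p + q + 3) * (p + 2) ^ (p + 2)) := by
      calc (p + q + 2) ^ (p + q + 2) * ((p + 1) ^ (p + 2) * (p + q + 3) ^ (p + q + 3))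
          = ((p + 1) ^ (p + 2) * (p + q + 2) ^ (p + q + 2)) * (p + q + 3) ^ (p + q + 3) := by ring
        _ ≤ ((p + q + 1) ^ (p + q + 2) * (p + 2) ^ (p + 2)) * (p + q + 3) ^ (p + q + 3) :=
            Nat.mul_le_mul_right _ ih
        _ = ((p + q + 1) ^ (p + q + 2) * (p + q + 3) ^ (p + q + 3)) * (p + 2) ^ (p + 2) := by ring
        _ ≤ ((p + q + 2) ^ (p + q + 2) * (p + q + 2) ^ (p + q + 3)) * (p + 2) ^ (p + 2) :=
            Nat.mul_le_mul_right _ hstep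
        _ = (p + q + 2) ^ (p + q + 2) * ((p + q + 2) ^ (p + q + 3) * (p + 2) ^ (p + 2)) := by ring
    exact Nat.le_of_mul_le_mul_left key ((by positivity))

lemma choose_id (ν κ : ℕ) : (ν + 1) * ν.choose κ = (ν + 1).choose κ * (ν + 1 - κ) := by
  have h1 := Nat.add_one_mul_choose_eq ν κ
  have h2 := Nat.choose_succ_right_eq (ν + 1) κ
  omega

noncomputable def MM (ν κ : ℕ) : ℝ :=
  (κ : ℝ) * (ν.choose κ : ℝ) * ((κ : ℝ) / ν) ^ κ * (1 - (κ : ℝ) / ν) ^ (ν + 1 - κ)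

lemma MM_eq (κ c : ℕ) (h : 0 < κ + c) :
    MM (κ + c) κ
      = ((κ * (κ + c).choose κ * κ ^ κ * c ^ (c + 1) : ℕ) : ℝ)
        / (((κ + c) ^ (κ + c + 1) : ℕ) : ℝ) := by
  have h1 : κ + c + 1 - κ = c + 1 := by omega
  have hν : (0 : ℝ) < ((κ : ℝ) + c) := by exact_mod_cast h
  rw [MM, h1]
  have h2 : (1 : ℝ) - (κ : ℝ) / ((κ : ℝ) + (c : ℝ)) = (c : ℝ) / ((κ : ℝ) + c) := by
    field_simp
    ring
  push_cast
  rw [h2, div_pow, div_pow, show κ + c + 1 = κ + (c + 1) from rfl, pow_add]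
  have hν' : ((κ : ℝ) + c) ≠ 0 := ne_of_gt hν
  have hP : ((κ : ℝ) + c) ^ κ ≠ 0 := pow_ne_zero _ hν'
  have hQ : ((κ : ℝ) + c) ^ (c + 1) ≠ 0 := pow_ne_zero _ hν'
  field_simp
  ring

lemma MM_nonneg {ν κ : ℕ} (h : κ ≤ ν) (h1 : 1 ≤ ν) : 0 ≤ MM ν κ := by
  obtain ⟨c, rfl⟩ : ∃ c, ν = κ + c := ⟨ν - κ, by omega⟩
  rw [MM_eq κ c (by omega)]
  positivity

lemma MM_symm (κ c : ℕ) (h : 0 < κ + c) : MM (κ + c) κ = MM (κ + c) c := by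
  have hcs : (c + κ).choose c = (c + κ).choose κ := by
    have := Nat.choose_symm (show κ ≤ c + κ by omega)
    rw [show c + κ - κ = c from by omega] at this
    rw [this]
  rw [MM_eq κ c h, show κ + c = c + κ from Nat.add_comm κ c, MM_eq c κ (by omega)]
  congr 1
  exact_mod_cast congrArg (Nat.cast (R := ℝ))
    (show κ * (c + κ).choose κ * κ ^ κ * c ^ (c + 1) = c * (c + κ).choose c * c ^ c * κ ^ (κ + 1)
      from by rw [hcs]; ring)

lemma natIneq (κ c : ℕ) :
    κ * (κ + (c + 1)).choose κ * κ ^ κ * (c + 1) ^ (c + 1 + 1) * (κ + (c + 2)) ^ (κ + (c + 2) + 1)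
      ≤ κ * (κ + (c + 2)).choose κ * κ ^ κ * (c + 2) ^ (c + 2 + 1)
          * (κ + (c + 1)) ^ (κ + (c + 1) + 1) := by
  have core := seq_chain c κ
  rw [show c + κ + 2 = κ + c + 2 from by omega, show c + κ + 1 = κ + c + 1 from by omega] at core
  -- core : (c+1)^(c+2) * (κ+c+2)^(κ+c+2) ≤ (κ+c+1)^(κ+c+2) * (c+2)^(c+2)
  have hch : (κ + c + 2) * (κ + c + 1).choose κ = (κ + c + 2).choose κ * (c + 2) := by
    have := choose_id (κ + c + 1) κ
    rw [show κ + c + 1 + 1 = κ + c + 2 from rfl, show κ + c + 2 - κ = c + 2 from by omega] at this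
    exact this
  calc κ * (κ + (c + 1)).choose κ * κ ^ κ * (c + 1) ^ (c + 1 + 1) * (κ + (c + 2)) ^ (κ + (c + 2) + 1)
      = (κ * κ ^ κ * (κ + c + 1).choose κ * (κ + c + 2))
          * ((c + 1) ^ (c + 2) * (κ + c + 2) ^ (κ + c + 2)) := by
        rw [show κ + (c + 1) = κ + c + 1 from rfl, show κ + (c + 2) = κ + c + 2 from rfl,
          show κ + c + 2 + 1 = (κ + c + 2) + 1 from rfl, pow_succ]
        ring
    _ ≤ (κ * κ ^ κ * (κ + c + 1).choose κ * (κ + c + 2))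
          * ((κ + c + 1) ^ (κ + c + 2) * (c + 2) ^ (c + 2)) := Nat.mul_le_mul_left _ core
    _ = (κ * κ ^ κ * ((κ + c + 2) * (κ + c + 1).choose κ))
          * ((κ + c + 1) ^ (κ + c + 2) * (c + 2) ^ (c + 2)) := by ring
    _ = (κ * κ ^ κ * ((κ + c + 2).choose κ * (c + 2)))
          * ((κ + c + 1) ^ (κ + c + 2) * (c + 2) ^ (c + 2)) := by rw [hch]
    _ = κ * (κ + (c + 2)).choose κ * κ ^ κ * (c + 2) ^ (c + 2 + 1)
          * (κ + (c + 1)) ^ (κ + (c + 1) + 1) := by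
        rw [show κ + (c + 1) = κ + c + 1 from rfl, show κ + (c + 2) = κ + c + 2 from rfl,
          show c + 2 + 1 = (c + 2) + 1 from rfl, pow_succ, show κ + c + 1 + 1 = κ + c + 2 from rfl]
        ring

lemma MM_mono1 {κ ν : ℕ} (hκ : 1 ≤ κ) (hν : κ + 1 ≤ ν) : MM ν κ ≤ MM (ν + 1) κ := by
  obtain ⟨c, rfl⟩ : ∃ c, ν = κ + (c + 1) := ⟨ν - κ - 1, by omega⟩
  rw [show κ + (c + 1) + 1 = κ + (c + 2) from rfl]
  rw [MM_eq κ (c + 1) (by omega), MM_eq κ (c + 2) (by omega)]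
  rw [div_le_div_iff₀ (by positivity) (by positivity)]
  exact_mod_cast natIneq κ c

lemma MM_mono2 {κ ν : ℕ} (hκ : 1 ≤ κ) (hν : κ + 1 ≤ ν) : MM ν κ ≤ MM (ν + 1) (κ + 1) := by
  obtain ⟨c, rfl⟩ : ∃ c, ν = κ + (c + 1) := ⟨ν - κ - 1, by omega⟩
  calc MM (κ + (c + 1)) κ = MM (κ + (c + 1)) (c + 1) := MM_symm κ (c + 1) (by omega)
    _ = MM ((c + 1) + κ) (c + 1) := by rw [Nat.add_comm κ (c + 1)]
    _ ≤ MM ((c + 1) + κ + 1) (c + 1) := MM_mono1 (by omega) (by omega)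
    _ = MM ((c + 1) + (κ + 1)) (c + 1) := by rw [show (c+1) + κ + 1 = (c+1) + (κ+1) from rfl]
    _ = MM ((c + 1) + (κ + 1)) (κ + 1) := MM_symm (c + 1) (κ + 1) (by omega)
    _ = MM (κ + (c + 1) + 1) (κ + 1) := by rw [show (c+1) + (κ+1) = κ + (c+1) + 1 from by omega]



lemma amgm (α β : ℕ) (hα : 1 ≤ α) (hβ : 1 ≤ β) {a : ℝ} (ha0 : 0 ≤ a) (ha1 : a ≤ 1) :
    a ^ α * (1 - a) ^ β
      ≤ ((α : ℝ) / ((α : ℝ) + (β : ℝ))) ^ α * ((β : ℝ) / ((α : ℝ) + (β : ℝ))) ^ β := by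
  have hαp : (0 : ℝ) < (α : ℝ) := by exact_mod_cast hα
  have hβp : (0 : ℝ) < (β : ℝ) := by exact_mod_cast hβ
  have hNp : (0 : ℝ) < (α : ℝ) + (β : ℝ) := by linarith
  have hN0 : ((α : ℝ) + (β : ℝ)) ≠ 0 := ne_of_gt hNp
  have h1a : (0 : ℝ) ≤ 1 - a := by linarith
  have hp₁ : (0 : ℝ) ≤ a * (((α : ℝ) + β) / α) := by positivity
  have hp₂ : (0 : ℝ) ≤ (1 - a) * (((α : ℝ) + β) / β) := by positivity
  have hsum : (α : ℝ) / ((α : ℝ) + β) + (β : ℝ) / ((α : ℝ) + β) = 1 := by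
    rw [← add_div, div_self hN0]
  have hgm := Real.geom_mean_le_arith_mean2_weighted
    (by positivity) (by positivity) hp₁ hp₂ hsum
  have hrhs : (α : ℝ) / ((α : ℝ) + β) * (a * (((α : ℝ) + β) / α))
      + (β : ℝ) / ((α : ℝ) + β) * ((1 - a) * (((α : ℝ) + β) / β)) = 1 := by
    field_simp
    ring
  rw [hrhs] at hgm
  have key : (a * (((α : ℝ) + β) / α)) ^ α * ((1 - a) * (((α : ℝ) + β) / β)) ^ β ≤ 1 := by
    have h2 := pow_le_pow_left₀ (by positivity) hgm (α + β)
    rw [one_pow, mul_pow] at h2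
    have c1 : ((a * (((α : ℝ) + β) / α)) ^ ((α : ℝ) / ((α : ℝ) + β))) ^ (α + β)
        = (a * (((α : ℝ) + β) / α)) ^ α := by
      rw [← Real.rpow_natCast ((a * (((α : ℝ) + β) / α)) ^ ((α : ℝ) / ((α : ℝ) + β))) (α + β),
        ← Real.rpow_mul hp₁]
      rw [show (α : ℝ) / ((α : ℝ) + β) * ((α + β : ℕ) : ℝ) = (α : ℝ) by
        push_cast; field_simp]
      rw [Real.rpow_natCast]
    have c2 : (((1 - a) * (((α : ℝ) + β) / β)) ^ ((β : ℝ) / ((α : ℝ) + β))) ^ (α + β)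
        = ((1 - a) * (((α : ℝ) + β) / β)) ^ β := by
      rw [← Real.rpow_natCast (((1 - a) * (((α : ℝ) + β) / β)) ^ ((β : ℝ) / ((α : ℝ) + β))) (α + β),
        ← Real.rpow_mul hp₂]
      rw [show (β : ℝ) / ((α : ℝ) + β) * ((α + β : ℕ) : ℝ) = (β : ℝ) by
        push_cast; field_simp]
      rw [Real.rpow_natCast]
    rw [c1, c2] at h2
    exact h2
  have e1 : (((α : ℝ) + β) / α) * ((α : ℝ) / ((α : ℝ) + β)) = 1 := by field_simp
  have e2 : (((α : ℝ) + β) / β) * ((β : ℝ) / ((α : ℝ) + β)) = 1 := by field_simp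
  calc a ^ α * (1 - a) ^ β
      = (a ^ α * (1 - a) ^ β)
          * (((((α : ℝ) + β) / α) * ((α : ℝ) / ((α : ℝ) + β))) ^ α
            * ((((α : ℝ) + β) / β) * ((β : ℝ) / ((α : ℝ) + β))) ^ β) := by
        rw [e1, e2, one_pow, one_pow, one_mul, mul_one]
    _ = ((a * (((α : ℝ) + β) / α)) ^ α * ((1 - a) * (((α : ℝ) + β) / β)) ^ β)
          * (((α : ℝ) / ((α : ℝ) + β)) ^ α * ((β : ℝ) / ((α : ℝ) + β)) ^ β) := by
        rw [mul_pow, mul_pow, mul_pow, mul_pow]; ring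
    _ ≤ 1 * (((α : ℝ) / ((α : ℝ) + β)) ^ α * ((β : ℝ) / ((α : ℝ) + β)) ^ β) :=
        mul_le_mul_of_nonneg_right key (by positivity)
    _ = ((α : ℝ) / ((α : ℝ) + β)) ^ α * ((β : ℝ) / ((α : ℝ) + β)) ^ β := one_mul _

lemma boundA (k d : ℕ) (hk : 1 ≤ k) {a : ℝ} (ha0 : 0 ≤ a) (ha1 : a ≤ 1) :
    (k : ℝ) * ((k + d).choose k : ℝ) * a ^ k * (1 - a) ^ d * (1 - a) ≤ MM (k + d + 1) k := by
  have key := amgm k (d + 1) hk (by omega) ha0 ha1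
  have hD : ((k : ℝ) + ((d + 1 : ℕ) : ℝ)) ≠ 0 := by positivity
  have hC : (0 : ℝ) ≤ (k : ℝ) * ((k + d).choose k : ℝ) := by positivity
  calc (k : ℝ) * ((k + d).choose k : ℝ) * a ^ k * (1 - a) ^ d * (1 - a)
      = (k : ℝ) * ((k + d).choose k : ℝ) * (a ^ k * (1 - a) ^ (d + 1)) := by
        rw [pow_succ]; ring
    _ ≤ (k : ℝ) * ((k + d).choose k : ℝ)
          * (((k : ℝ) / ((k : ℝ) + ((d + 1 : ℕ) : ℝ))) ^ k
            * (((d + 1 : ℕ) : ℝ) / ((k : ℝ) + ((d + 1 : ℕ) : ℝ))) ^ (d + 1)) :=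
        mul_le_mul_of_nonneg_left key hC
    _ = MM (k + d + 1) k := by
        rw [MM, show k + d + 1 + 1 - k = d + 2 from by omega]
        have hcast : ((k + d + 1 : ℕ) : ℝ) = (k : ℝ) + ((d + 1 : ℕ) : ℝ) := by push_cast; ring
        rw [hcast]
        have h2 : (1 : ℝ) - (k : ℝ) / ((k : ℝ) + ((d + 1 : ℕ) : ℝ))
            = ((d + 1 : ℕ) : ℝ) / ((k : ℝ) + ((d + 1 : ℕ) : ℝ)) := by
          field_simp
          ring
        rw [h2, pow_succ (((d + 1 : ℕ) : ℝ) / ((k : ℝ) + ((d + 1 : ℕ) : ℝ))) (d + 1)]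
        have hid : ((k + d + 1) * ((k + d).choose k) : ℕ) = (((k + d + 1).choose k) * (d + 1) : ℕ) := by
          have := choose_id (k + d) k
          rw [show k + d + 1 - k = d + 1 from by omega] at this
          exact this
        have hidR : ((k : ℝ) + ((d + 1 : ℕ) : ℝ)) * ((k + d).choose k : ℝ)
            = ((k + d + 1).choose k : ℝ) * ((d + 1 : ℕ) : ℝ) := by
          rw [← hcast]
          exact_mod_cast congrArg (Nat.cast (R := ℝ)) hid
        have hscal : ((k + d).choose k : ℝ)
            = ((k + d + 1).choose k : ℝ)
              * (((d + 1 : ℕ) : ℝ) / ((k : ℝ) + ((d + 1 : ℕ) : ℝ))) := by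
          rw [mul_div_assoc'] -- maybe not needed
          rw [eq_div_iff hD]
          linarith [hidR]
        calc (k : ℝ) * ((k + d).choose k : ℝ)
              * (((k : ℝ) / ((k : ℝ) + ((d + 1 : ℕ) : ℝ))) ^ k
                * (((d + 1 : ℕ) : ℝ) / ((k : ℝ) + ((d + 1 : ℕ) : ℝ))) ^ (d + 1))
            = ((k + d).choose k : ℝ) * ((k : ℝ)
                * (((k : ℝ) / ((k : ℝ) + ((d + 1 : ℕ) : ℝ))) ^ k
                * (((d + 1 : ℕ) : ℝ) / ((k : ℝ) + ((d + 1 : ℕ) : ℝ))) ^ (d + 1))) := by ring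
          _ = ((k + d + 1).choose k : ℝ)
                * (((d + 1 : ℕ) : ℝ) / ((k : ℝ) + ((d + 1 : ℕ) : ℝ))) * ((k : ℝ)
                * (((k : ℝ) / ((k : ℝ) + ((d + 1 : ℕ) : ℝ))) ^ k
                * (((d + 1 : ℕ) : ℝ) / ((k : ℝ) + ((d + 1 : ℕ) : ℝ))) ^ (d + 1))) := by
              rw [← hscal]
          _ = (k : ℝ) * ((k + d + 1).choose k : ℝ)
                * ((k : ℝ) / ((k : ℝ) + ((d + 1 : ℕ) : ℝ))) ^ k
                * ((((d + 1 : ℕ) : ℝ) / ((k : ℝ) + ((d + 1 : ℕ) : ℝ))) ^ (d + 1)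
                  * (((d + 1 : ℕ) : ℝ) / ((k : ℝ) + ((d + 1 : ℕ) : ℝ)))) := by ring

lemma hf_uniform {S : Finset ι} {k : ℕ} {x : ι → ℝ} {a : ℝ} (hx : ∀ i ∈ S, x i = a) :
    hf x S k
      = (k : ℝ) * (S.card.choose k : ℝ) * a ^ k * (1 - a) ^ (S.card - k) * (1 - a) := by
  rw [hf]
  have hterm : ∀ A ∈ S.powersetCard k,
      (∏ i ∈ A, x i) * (∏ i ∈ S \ A, (1 - x i)) * ((k : ℝ) - ∑ i ∈ A, x i)
        = a ^ k * (1 - a) ^ (S.card - k) * ((k : ℝ) * (1 - a)) := by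
    intro A hA
    obtain ⟨hAS, hAc⟩ := Finset.mem_powersetCard.1 hA
    have e1 : ∏ i ∈ A, x i = a ^ k := by
      rw [Finset.prod_congr rfl (fun i hi => hx i (hAS hi)), Finset.prod_const, hAc]
    have e2 : ∏ i ∈ S \ A, (1 - x i) = (1 - a) ^ (S.card - k) := by
      rw [Finset.prod_congr rfl (fun i hi => by rw [hx i (Finset.mem_sdiff.1 hi).1]),
        Finset.prod_const, Finset.card_sdiff_of_subset hAS, hAc]
    have e3 : ∑ i ∈ A, x i = (k : ℝ) * a := by
      rw [Finset.sum_congr rfl (fun i hi => hx i (hAS hi)), Finset.sum_const, hAc,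
        nsmul_eq_mul]
    rw [e1, e2, e3]
    ring
  rw [Finset.sum_congr rfl hterm, Finset.sum_const, Finset.card_powersetCard, nsmul_eq_mul]
  ring

lemma peel0 {x : ι → ℝ} {S : Finset ι} {i : ι} (hi : i ∈ S) (hxi : x i = 0) (k : ℕ) :
    hf x S k = hf x (S.erase i) k := by
  cases k with
  | zero => rw [hf_zero, hf_zero]
  | succ m => rw [hf_erase x hi m, hxi]; ring

lemma peel1 {x : ι → ℝ} {S : Finset ι} {i : ι} (hi : i ∈ S) (hxi : x i = 1) (k : ℕ) :
    hf x S (k + 1) = hf x (S.erase i) k := by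
  rw [hf_erase x hi k, hxi]; ring

lemma structured_le (a : ℝ) (ha0 : 0 ≤ a) (ha1 : a ≤ 1) :
    ∀ (N : ℕ) (S : Finset ι) (x : ι → ℝ), S.card = N →
      (∀ i ∈ S, x i = 0 ∨ x i = 1 ∨ x i = a) →
      ∀ k : ℕ, 1 ≤ k → k ≤ N → hf x S k ≤ MM (N + 1) k := by
  intro N
  induction N with
  | zero => intro S x hS hstr k hk hkN; omega
  | succ N IH =>
    intro S x hS hstr k hk hkN
    by_cases h0 : ∃ i ∈ S, x i = 0
    · obtain ⟨i, hi, hxi⟩ := h0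
      have hcard : (S.erase i).card = N := by
        rw [Finset.card_erase_of_mem hi, hS]
        omega
      rw [peel0 hi hxi k]
      by_cases hkN' : k ≤ N
      · refine le_trans (IH (S.erase i) x hcard
          (fun l hl => hstr l (Finset.erase_subset i S hl)) k hk hkN') ?_
        exact MM_mono1 hk (by omega)
      · have hk' : (S.erase i).card < k := by omega
        rw [hf_of_card_lt hk']
        exact MM_nonneg (by omega) (by omega)
    · by_cases h1 : ∃ i ∈ S, x i = 1
      · obtain ⟨i, hi, hxi⟩ := h1
        have hcard : (S.erase i).card = N := by
          rw [Finset.card_erase_of_mem hi, hS]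
          omega
        obtain ⟨m, rfl⟩ : ∃ m, k = m + 1 := ⟨k - 1, by omega⟩
        rw [peel1 hi hxi m]
        by_cases hm : 1 ≤ m
        · refine le_trans (IH (S.erase i) x hcard
            (fun l hl => hstr l (Finset.erase_subset i S hl)) m hm (by omega)) ?_
          exact MM_mono2 hm (by omega)
        · have hm0 : m = 0 := by omega
          subst hm0
          rw [hf_zero]
          exact MM_nonneg (by omega) (by omega)
      · push_neg at h0 h1
        have hxa : ∀ i ∈ S, x i = a := by
          intro i hi
          rcases hstr i hi with h | h | h
          · exact absurd h (h0 i hi)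
          · exact absurd h (h1 i hi)
          · exact h
        rw [hf_uniform hxa, hS]
        obtain ⟨d, hd⟩ : ∃ d, N + 1 = k + d := ⟨N + 1 - k, by omega⟩
        rw [hd, show k + d - k = d from by omega, show k + d + 1 = k + d + 1 from rfl]
        exact boundA k d hk ha0 ha1

lemma hf_cont (S : Finset ι) (k : ℕ) : Continuous fun x : ι → ℝ => hf x S k := by
  unfold hf
  apply continuous_finset_sum
  intro A _
  exact ((continuous_finset_prod A fun i _ => continuous_apply i).mul
      (continuous_finset_prod (S \ A) fun i _ => continuous_const.sub (continuous_apply i))).mul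
    (continuous_const.sub (continuous_finset_sum A fun i _ => continuous_apply i))

lemma sum_sq_update {S : Finset ι} {i : ι} (hi : i ∈ S) (x : ι → ℝ) (a : ℝ) :
    ∑ l ∈ S, (Function.update x i a l) ^ 2 = a ^ 2 + ∑ l ∈ S.erase i, (x l) ^ 2 := by
  rw [← Finset.add_sum_erase _ _ hi, Function.update_self]
  congr 1
  refine Finset.sum_congr rfl fun l hl => ?_
  rw [Function.update_of_ne (Finset.mem_erase.1 hl).1]

lemma sumsq2 {S : Finset ι} {i j : ι} (hi : i ∈ S) (hj : j ∈ S) (hij : i ≠ j)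
    (x : ι → ℝ) (a b : ℝ) :
    ∑ l ∈ S, (Function.update (Function.update x i a) j b l) ^ 2
      = ∑ l ∈ S, (x l) ^ 2 - (x i) ^ 2 - (x j) ^ 2 + a ^ 2 + b ^ 2 := by
  have hiS' : i ∈ S.erase j := Finset.mem_erase.2 ⟨hij, hi⟩
  rw [sum_sq_update hj _ b, sum_sq_update hiS' x a]
  have e1 : ∑ l ∈ S, (x l) ^ 2 = (x j) ^ 2 + ((x i) ^ 2 + ∑ l ∈ (S.erase j).erase i, (x l) ^ 2) := by
    rw [← Finset.add_sum_erase _ (fun l => (x l) ^ 2) hj,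
      ← Finset.add_sum_erase _ (fun l => (x l) ^ 2) hiS']
  rw [e1]
  ring

end Stmt17

open Stmt17

theorem stmt17 {ι : Type*} [DecidableEq ι] (S : Finset ι) (n k : ℕ)
    (hS : S.card = n - 1) (hn : 2 ≤ n) (hk1 : 1 ≤ k) (hk2 : k ≤ n - 1) :
    (∀ x : ι → ℝ, (∀ i ∈ S, x i ∈ Set.Icc (0:ℝ) 1) →
      ∑ A ∈ S.powersetCard k,
          (∏ i ∈ A, x i) * (∏ i ∈ S \ A, (1 - x i)) * ((k:ℝ) - ∑ i ∈ A, x i)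
        ≤ (k:ℝ) * (n.choose k : ℝ) * (1 - (k:ℝ)/n)^(n+1-k) * ((k:ℝ)/n)^k)
    ∧ (∑ A ∈ S.powersetCard k,
          (∏ i ∈ A, ((k:ℝ)/n)) * (∏ i ∈ S \ A, (1 - (k:ℝ)/n))
            * ((k:ℝ) - ∑ i ∈ A, ((k:ℝ)/n))
        = (k:ℝ) * (n.choose k : ℝ) * (1 - (k:ℝ)/n)^(n+1-k) * ((k:ℝ)/n)^k) := by
  classical
  have hMMeq : MM n k = (k:ℝ) * (n.choose k : ℝ) * (1 - (k:ℝ)/n)^(n+1-k) * ((k:ℝ)/n)^k := by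
    rw [MM]; ring
  have hpart2 : hf (fun _ => (k:ℝ)/n) S k = MM n k := by
    have huni := hf_uniform (S := S) (k := k) (x := fun _ => (k:ℝ)/n) (a := (k:ℝ)/n)
      (fun _ _ => rfl)
    rw [huni, hS]
    have hkn : k ≤ n := by omega
    have hnne : ((n:ℝ)) ≠ 0 := by positivity
    have ha' : (1:ℝ) - (k:ℝ)/n = ((n - k : ℕ) : ℝ)/(n:ℝ) := by
      rw [Nat.cast_sub hkn]; field_simp
    have hnat : n * (n-1).choose k = n.choose k * (n - k) := by
      have h := choose_id (n-1) k
      rw [show n - 1 + 1 = n from by omega] at h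
      exact h
    have hC : ((n-1).choose k : ℝ) = (n.choose k : ℝ) * ((1:ℝ) - (k:ℝ)/n) := by
      have hcast := congrArg (Nat.cast (R := ℝ)) hnat
      rw [Nat.cast_mul, Nat.cast_mul, Nat.cast_sub hkn] at hcast
      rw [ha', Nat.cast_sub hkn]
      field_simp
      linarith [hcast]
    rw [hC, MM]
    have hpow : ((1:ℝ) - (k:ℝ)/n)^(n+1-k)
        = ((1:ℝ) - (k:ℝ)/n)^(n-1-k) * ((1:ℝ) - (k:ℝ)/n) * ((1:ℝ) - (k:ℝ)/n) := by
      rw [← pow_succ, ← pow_succ]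
      congr 1
      omega
    rw [hpow]
    ring
  set F : ι → Set ℝ := fun i => if i ∈ S then Set.Icc (0:ℝ) 1 else ({0} : Set ℝ) with hF
  have hKc : IsCompact (Set.pi Set.univ F) := isCompact_univ_pi fun i => by
    by_cases h : i ∈ S
    · simp only [hF, if_pos h]; exact isCompact_Icc
    · simp only [hF, if_neg h]; exact isCompact_singleton
  have hKne : (Set.pi Set.univ F).Nonempty := by
    refine ⟨fun _ => 0, fun i _ => ?_⟩
    by_cases h : i ∈ S
    · simp only [hF, if_pos h]; exact ⟨le_refl 0, zero_le_one⟩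
    · simp only [hF, if_neg h]; rfl
  set K := Set.pi Set.univ F with hKdef
  obtain ⟨z, hzK, hzmax⟩ := hKc.exists_isMaxOn hKne (hf_cont S k).continuousOn
  have hzmax' : ∀ y ∈ K, hf y S k ≤ hf z S k := fun y hy => (isMaxOn_iff.1 hzmax) y hy
  set A := K ∩ (fun x => hf x S k) ⁻¹' {hf z S k} with hAdef
  have hAc : IsCompact A := hKc.inter_right (isClosed_singleton.preimage (hf_cont S k))
  have hAne : A.Nonempty := ⟨z, hzK, rfl⟩
  obtain ⟨w, hwA, hwmax⟩ := hAc.exists_isMaxOn hAne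
    (continuous_finset_sum S fun i _ => (continuous_apply i).pow 2).continuousOn
  have hwK : w ∈ K := hwA.1
  have hwM : hf w S k = hf z S k := hwA.2
  have hwmax' : ∀ y ∈ A, ∑ i ∈ S, (y i)^2 ≤ ∑ i ∈ S, (w i)^2 :=
    fun y hy => (isMaxOn_iff.1 hwmax) y hy
  have hwIcc : ∀ i ∈ S, 0 ≤ w i ∧ w i ≤ 1 := by
    intro i hi
    have h := hwK i (Set.mem_univ i)
    simp only [hF, if_pos hi, Set.mem_Icc] at h
    exact h
  have hupd : ∀ (x : ι → ℝ), x ∈ K → ∀ i ∈ S, ∀ u : ℝ, 0 ≤ u → u ≤ 1 →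
      Function.update x i u ∈ K := by
    intro x hx i hi u hu0 hu1 j _
    by_cases hji : j = i
    · subst hji
      rw [Function.update_self]
      simp only [hF, if_pos hi, Set.mem_Icc]
      exact ⟨hu0, hu1⟩
    · rw [Function.update_of_ne hji]
      exact hx j (Set.mem_univ j)
  have hpair : ∀ i ∈ S, ∀ j ∈ S, i ≠ j →
      w i = w j ∨ w i = 0 ∨ w i = 1 ∨ w j = 0 ∨ w j = 1 := by
    intro i hi j hj hij
    by_contra hcon
    push_neg at hcon
    obtain ⟨huv, hu0, hu1, hv0, hv1⟩ := hcon
    obtain ⟨hu0', hu1'⟩ := hwIcc i hi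
    obtain ⟨hv0', hv1'⟩ := hwIcc j hj
    have hu0lt : 0 < w i := lt_of_le_of_ne hu0' (Ne.symm hu0)
    have hu1lt : w i < 1 := lt_of_le_of_ne hu1' hu1
    have hv0lt : 0 < w j := lt_of_le_of_ne hv0' (Ne.symm hv0)
    have hv1lt : w j < 1 := lt_of_le_of_ne hv1' hv1
    obtain ⟨c0, c1, c2, c3, c4, hform⟩ := pair_form w hi hj hij hk1
    have hww : Function.update (Function.update w i (w i)) j (w j) = w := by
      rw [Function.update_eq_self, Function.update_eq_self]
    have heq0 : hf w S k
        = c0 + c1 * (w i + w j) + c2 * (w i + w j)^2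
          + (c3 + c4 * (w i + w j)) * (w i * w j) := by
      have h := hform (w i) (w j)
      rw [hww] at h
      exact h
    set m0 := (w i + w j)/2 with hm0
    set dm := min m0 (1 - m0) with hdm
    have hm00 : 0 ≤ m0 := by rw [hm0]; linarith
    have hm01 : m0 ≤ 1 := by rw [hm0]; linarith
    have hdm0 : 0 ≤ dm := le_min hm00 (by linarith)
    have hdmle1 : dm ≤ 1 - m0 := min_le_right _ _
    have hdmlem : dm ≤ m0 := min_le_left _ _
    have hd0sq : ((w i - w j)/2)^2 < dm^2 := by
      have h1 : ((w i - w j)/2)^2 < m0^2 := by rw [hm0]; nlinarith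
      have h2 : ((w i - w j)/2)^2 < (1 - m0)^2 := by rw [hm0]; nlinarith
      rcases min_cases m0 (1 - m0) with ⟨hq, -⟩ | ⟨hq, -⟩
      · rw [hdm, hq]; exact h1
      · rw [hdm, hq]; exact h2
    have hy1K : Function.update (Function.update w i m0) j m0 ∈ K :=
      hupd _ (hupd w hwK i hi m0 hm00 hm01) j hj m0 hm00 hm01
    have hy2K : Function.update (Function.update w i (m0 + dm)) j (m0 - dm) ∈ K :=
      hupd _ (hupd w hwK i hi (m0 + dm) (by linarith) (by linarith)) j hj (m0 - dm)
        (by linarith) (by linarith)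
    have hd1 : hf (Function.update (Function.update w i m0) j m0) S k - hf w S k
        = (c3 + c4 * (w i + w j)) * (((w i + w j)/2)^2 - w i * w j) := by
      rw [hform m0 m0, heq0, hm0]; ring
    have hd2 : hf (Function.update (Function.update w i (m0 + dm)) j (m0 - dm)) S k
          - hf w S k
        = (c3 + c4 * (w i + w j)) * ((((w i + w j)/2)^2 - dm^2) - w i * w j) := by
      rw [hform (m0 + dm) (m0 - dm), heq0, hm0]; ring
    have hne : w i - w j ≠ 0 := sub_ne_zero.2 huv
    have hsq : 0 < (w i - w j)^2 :=
      lt_of_le_of_ne (sq_nonneg _) (Ne.symm (pow_ne_zero 2 hne))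
    have hPpos : 0 < ((w i + w j)/2)^2 - w i * w j := by
      have hrw : ((w i + w j)/2)^2 - w i * w j = ((w i - w j)^2)/4 := by ring
      rw [hrw]; linarith
    rcases lt_trichotomy (c3 + c4 * (w i + w j)) 0 with hQ | hQ | hQ
    · have hgt : 0 < hf (Function.update (Function.update w i (m0 + dm)) j (m0 - dm)) S k
          - hf w S k := by
        rw [hd2]
        have hfac : (((w i + w j)/2)^2 - dm^2) - w i * w j < 0 := by
          have hrw : ((w i + w j)/2)^2 - w i * w j = ((w i - w j)/2)^2 := by ring
          nlinarith [hd0sq]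
        exact mul_pos_of_neg_of_neg hQ hfac
      have hle := hzmax' _ hy2K
      linarith [hle, hgt, hwM]
    · have hy2M : hf (Function.update (Function.update w i (m0 + dm)) j (m0 - dm)) S k
          = hf z S k := by
        have hz : hf (Function.update (Function.update w i (m0 + dm)) j (m0 - dm)) S k
            - hf w S k = 0 := by rw [hd2, hQ]; ring
        linarith [hwM, hz]
      have hy2A : Function.update (Function.update w i (m0 + dm)) j (m0 - dm) ∈ A :=
        ⟨hy2K, by simp only [Set.mem_preimage, Set.mem_singleton_iff]; exact hy2M⟩
      have hΦ := hwmax' _ hy2A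
      rw [sumsq2 hi hj hij w (m0 + dm) (m0 - dm)] at hΦ
      have hid : (m0 + dm)^2 + (m0 - dm)^2 - (w i)^2 - (w j)^2
          = 2*dm^2 - 2*((w i - w j)/2)^2 := by
        rw [hm0]; ring
      linarith [hd0sq, hΦ, hid]
    · have hgt : 0 < hf (Function.update (Function.update w i m0) j m0) S k - hf w S k := by
        rw [hd1]; exact mul_pos hQ hPpos
      have hle := hzmax' _ hy1K
      linarith [hle, hgt, hwM]
  obtain ⟨a, ha0, ha1, hstr⟩ :
      ∃ a : ℝ, 0 ≤ a ∧ a ≤ 1 ∧ ∀ l ∈ S, w l = 0 ∨ w l = 1 ∨ w l = a := by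
    by_cases hT : ∃ i0 ∈ S, w i0 ≠ 0 ∧ w i0 ≠ 1
    · obtain ⟨i0, hi0S, hi0a, hi0b⟩ := hT
      refine ⟨w i0, (hwIcc i0 hi0S).1, (hwIcc i0 hi0S).2, ?_⟩
      intro l hl
      by_cases hl0 : w l = 0
      · exact Or.inl hl0
      by_cases hl1 : w l = 1
      · exact Or.inr (Or.inl hl1)
      by_cases hli : l = i0
      · subst hli; exact Or.inr (Or.inr rfl)
      · rcases hpair l hl i0 hi0S hli with h | h | h | h | h
        · exact Or.inr (Or.inr h)
        · exact absurd h hl0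
        · exact absurd h hl1
        · exact absurd h hi0a
        · exact absurd h hi0b
    · push_neg at hT
      refine ⟨0, le_refl 0, zero_le_one, ?_⟩
      intro l hl
      rcases Classical.em (w l = 0) with h | h
      · exact Or.inl h
      · exact Or.inr (Or.inl (hT l hl h))
  have hbound : hf z S k ≤ MM n k := by
    rw [← hwM]
    have h := structured_le a ha0 ha1 S.card S w rfl hstr k hk1 (by omega)
    rwa [show S.card + 1 = n from by omega] at h
  constructor
  · intro x hx
    set x' : ι → ℝ := fun l => if l ∈ S then x l else 0 with hx'
    have hx'K : x' ∈ K := by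
      intro l _
      by_cases h : l ∈ S
      · simp only [hF, hx', if_pos h]
        exact hx l h
      · simp only [hF, hx', if_neg h]
        rfl
    have hfeq : hf x S k = hf x' S k := hf_congr (fun l hl => by simp [hx', hl])
    have hfin : hf x S k ≤ MM n k := le_trans (by rw [hfeq]; exact hzmax' x' hx'K) hbound
    rw [hMMeq] at hfin
    exact hfin
  · exact hpart2.trans hMMeq
end

section
/- Let N be a finite set of size n ≥ 2, 1 ≤ k ≤ n−1, and x ∈ [0,1]^N with x_i = k/n for all i. Let R be a random subset of N where each element is included independently with probability k/n. Then E[min(|R|, k)] = k·(1 − C(n,k)·(1−k/n)^{n+1−k}·(k/n)^k). -/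
open Finset

lemma key_identity_s18 (m t : ℕ) (ht : t + 1 ≤ m) :
    ∑ j ∈ range (m + 1 + 1),
        ((m+1).choose j : ℝ) * (((t+1:ℕ):ℝ)/((m+1:ℕ):ℝ))^j * (1 - ((t+1:ℕ):ℝ)/((m+1:ℕ):ℝ))^(m+1-j)
          * ((min j (t+1) : ℕ) : ℝ)
    = ((t+1:ℕ):ℝ) * (1 - ((m+1).choose (t+1) : ℝ) * (1 - ((t+1:ℕ):ℝ)/((m+1:ℕ):ℝ))^(m+1+1-(t+1))
          * (((t+1:ℕ):ℝ)/((m+1:ℕ):ℝ))^(t+1)) := by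
  set n := m + 1 with hn
  set k := t + 1 with hkdef
  set p : ℝ := ((k:ℕ):ℝ)/((n:ℕ):ℝ) with hp
  set q : ℝ := 1 - p with hq
  have hn0 : ((n:ℕ):ℝ) ≠ 0 := by positivity
  have hnp : ((n:ℕ):ℝ) * p = (k:ℝ) := by rw [hp]; field_simp
  have hpq : p + q = 1 := by ring
  set c : ℕ → ℝ := fun j => ((n).choose j : ℝ) * p^j * q^(n-j) with hc
  set b : ℕ → ℝ := fun j => (m.choose j : ℝ) * p^j * q^(m-j) with hb
  set g : ℕ → ℝ := fun i => (m.choose i : ℝ) * p^i * q^(m+1-i) with hg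
  -- binomial theorem
  have h_binom : ∑ j ∈ range (n+1), c j = 1 := by
    have h := add_pow p q n
    rw [hpq, one_pow] at h
    rw [h]
    exact Finset.sum_congr rfl fun j _ => by simp only [hc]; ring
  -- telescoping identity
  have hAB : ∑ j ∈ range k, c j - ∑ j ∈ range t, b j = g t := by
    rw [hkdef, Finset.sum_range_succ' c t]
    have hc0 : c 0 = g 0 := by simp [hc, hg, hn]
    have hterm : ∀ i ∈ range t, c (i+1) - b i = g (i+1) - g i := by
      intro i hi
      have hit : i < t := Finset.mem_range.mp hi
      have him : i ≤ m := by omega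
      have e1 : n - (i+1) = m - i := by omega
      have e2 : m + 1 - (i+1) = m - i := by omega
      have e3 : m + 1 - i = (m - i) + 1 := by omega
      have hch : ((n).choose (i+1) : ℝ) = (m.choose i : ℝ) + (m.choose (i+1) : ℝ) := by
        rw [hn, Nat.choose_succ_succ]; push_cast; ring
      simp only [hc, hb, hg, e1, e2, e3, hch]
      have : q = 1 - p := hq
      rw [this]; ring
    have hsum : ∑ i ∈ range t, (c (i+1) - b i) = g t - g 0 := by
      rw [← Finset.sum_range_sub g t]
      exact Finset.sum_congr rfl hterm
    have : ∑ i ∈ range t, c (i+1) - ∑ i ∈ range t, b i = g t - g 0 := by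
      rw [← Finset.sum_sub_distrib]; exact hsum
    rw [hc0]; linarith [this]
  -- weighted sum
  have h_jsum : ∑ j ∈ range k, (j:ℝ) * c j = (k:ℝ) * ∑ j ∈ range t, b j := by
    rw [hkdef, Finset.sum_range_succ' (fun j => (j:ℝ) * c j) t]
    simp only [Nat.cast_zero, zero_mul, add_zero]
    rw [Finset.mul_sum]
    refine Finset.sum_congr rfl fun i hi => ?_
    have hit : i < t := Finset.mem_range.mp hi
    have e1 : n - (i+1) = m - i := by omega
    have hch : ((i:ℝ)+1) * (((m+1)).choose (i+1) : ℝ) = ((m:ℝ)+1) * (m.choose i : ℝ) := by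
      have hcast := congrArg (Nat.cast : ℕ → ℝ) (Nat.add_one_mul_choose_eq m i)
      push_cast at hcast
      linear_combination -hcast
    simp only [hc, hb, e1]
    have hkr : (k:ℝ) * ((m.choose i : ℝ) * p^i * q^(m-i))
        = (((n:ℕ):ℝ) * p) * ((m.choose i : ℝ) * p^i * q^(m-i)) := by rw [hnp]
    rw [hkr]
    simp only [hn, hkdef]
    push_cast
    linear_combination (p^(i+1) * q^(m-i)) * hch
  -- restrict subtracted sum
  have h_sub : ∑ j ∈ range (n+1), c j * (((k - j : ℕ)):ℝ)
      = ∑ j ∈ range k, c j * ((k:ℝ) - (j:ℝ)) := by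
    rw [← Finset.sum_subset (Finset.range_subset_range.mpr (by omega : k ≤ n+1))]
    · refine Finset.sum_congr rfl fun j hj => ?_
      have hjk : j < k := Finset.mem_range.mp hj
      rw [Nat.cast_sub (by omega)]
    · intro j _ hj
      have : k ≤ j := le_of_not_gt (by simpa using hj)
      simp [Nat.sub_eq_zero_of_le this]
  -- min rewrite
  have h_min : ∀ j, ((min j k : ℕ) : ℝ) = (k:ℝ) - (((k - j : ℕ)):ℝ) := by
    intro j
    have : k - (k - j) = min j k := by omega
    rw [← this, Nat.cast_sub (by omega)]
  -- put together
  calc ∑ j ∈ range (n+1), c j * ((min j k : ℕ) : ℝ)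
      = ∑ j ∈ range (n+1), ((k:ℝ) * c j - c j * (((k - j : ℕ)):ℝ)) := by
        refine Finset.sum_congr rfl fun j _ => ?_
        rw [h_min j]; ring
    _ = (k:ℝ) * ∑ j ∈ range (n+1), c j - ∑ j ∈ range (n+1), c j * (((k - j : ℕ)):ℝ) := by
        rw [Finset.sum_sub_distrib, Finset.mul_sum]
    _ = (k:ℝ) - ∑ j ∈ range k, c j * ((k:ℝ) - (j:ℝ)) := by rw [h_binom, h_sub, mul_one]
    _ = (k:ℝ) - ((k:ℝ) * ∑ j ∈ range k, c j - ∑ j ∈ range k, (j:ℝ) * c j) := by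
        congr 1
        rw [Finset.mul_sum, ← Finset.sum_sub_distrib]
        exact Finset.sum_congr rfl fun j _ => by ring
    _ = (k:ℝ) - (k:ℝ) * g t := by
        rw [h_jsum, ← mul_sub, hAB]
    _ = (k:ℝ) * (1 - ((n).choose k : ℝ) * q^(n+1-k) * p^k) := by
        have e1 : n + 1 - k = m + 1 - t := by omega
        have hch : ((n).choose k : ℝ) * p = (m.choose t : ℝ) := by
          have hcast := congrArg (Nat.cast : ℕ → ℝ) (Nat.add_one_mul_choose_eq m t)
          push_cast at hcast
          simp only [hn, hkdef, hp]
          push_cast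
          field_simp
          linear_combination -hcast
        have e2 : ((n).choose k : ℝ) * p^k = (m.choose t : ℝ) * p^t := by
          rw [hkdef, pow_succ' p t, ← mul_assoc, hch]
        rw [e1, hg]
        simp only
        rw [mul_sub, mul_one]
        congr 1
        rw [← e2]; ring

theorem stmt18 {ι : Type*} [DecidableEq ι] (N : Finset ι) (n k : ℕ)
    (hN : N.card = n) (hn : 2 ≤ n) (hk1 : 1 ≤ k) (hk2 : k ≤ n - 1) :
    ∑ A ∈ N.powerset,
        (∏ i ∈ A, ((k:ℝ)/n)) * (∏ i ∈ N \ A, (1 - (k:ℝ)/n)) * ((min A.card k : ℕ) : ℝ)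
    = (k:ℝ) * (1 - (n.choose k : ℝ) * (1 - (k:ℝ)/n)^(n+1-k) * ((k:ℝ)/n)^k) := by
  set p : ℝ := (k:ℝ)/n with hp
  set q : ℝ := 1 - p with hq
  set F : ℕ → ℝ := fun j => p^j * q^(n-j) * ((min j k : ℕ) : ℝ) with hF
  have step1 : ∑ A ∈ N.powerset,
      (∏ i ∈ A, p) * (∏ i ∈ N \ A, q) * ((min A.card k : ℕ) : ℝ)
      = ∑ A ∈ N.powerset, F A.card := by
    refine Finset.sum_congr rfl fun A hA => ?_
    have hAN : A ⊆ N := Finset.mem_powerset.mp hA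
    rw [Finset.prod_const, Finset.prod_const, Finset.card_sdiff_of_subset hAN, hN, hF]
  rw [step1, Finset.sum_powerset, hN]
  have step2 : ∀ j ∈ range (n+1), ∑ t ∈ Finset.powersetCard j N, F t.card
      = (n.choose j : ℝ) * F j := by
    intro j _
    rw [Finset.sum_powersetCard j N F, hN, nsmul_eq_mul]
  rw [Finset.sum_congr rfl step2]
  obtain ⟨m, rfl⟩ : ∃ m, n = m + 1 := ⟨n - 1, by omega⟩
  obtain ⟨t, rfl⟩ : ∃ t, k = t + 1 := ⟨k - 1, by omega⟩
  have ht : t + 1 ≤ m := by omega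
  simp only [hF, hq, hp]
  rw [← key_identity_s18 m t ht]
  exact Finset.sum_congr rfl fun j _ => by ring
end

section
/- Let N be a finite set, x ∈ [0,1]^N with ∑_i x_i ≤ k, and e, f distinct elements of N. For a finite set A with e ∈ A ⊆ N, f ∉ A, |A| ≥ k, define M(A) = (k − x_e)/|A| + x(A\{e})/(|A|(|A|−1)). Then M(A) ≥ M(A ∪ {f}); i.e., (k − x_e − x_f)/(|A|(|A|+1)) + 2·x(A\{e})/((|A|²−1)·|A|) ≥ 0 and equals M(A) − M(A∪{f}). -/
theorem stmt19 {ι : Type*} [DecidableEq ι] (N : Finset ι) (k : ℕ) (x : ι → ℝ)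
    (hx : ∀ i ∈ N, x i ∈ Set.Icc (0:ℝ) 1) (hsum : ∑ i ∈ N, x i ≤ (k:ℝ))
    (e f : ι) (hef : e ≠ f) (hfN : f ∈ N)
    (A : Finset ι) (he : e ∈ A) (hA : A ⊆ N) (hfA : f ∉ A) (hAk : k ≤ A.card) :
    ((((k:ℝ) - x e)/(A.card : ℝ)
        + (∑ i ∈ A.erase e, x i)/((A.card : ℝ) * ((A.card : ℝ) - 1)))
      - (((k:ℝ) - x e)/(((A ∪ {f}).card : ℝ))
        + (∑ i ∈ (A ∪ {f}).erase e, x i)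
            /(((A ∪ {f}).card : ℝ) * (((A ∪ {f}).card : ℝ) - 1)))
      = ((k:ℝ) - x e - x f)/((A.card : ℝ) * ((A.card : ℝ) + 1))
        + 2*(∑ i ∈ A.erase e, x i)/((((A.card : ℝ))^2 - 1) * (A.card : ℝ)))
    ∧ 0 ≤ ((k:ℝ) - x e - x f)/((A.card : ℝ) * ((A.card : ℝ) + 1))
        + 2*(∑ i ∈ A.erase e, x i)/((((A.card : ℝ))^2 - 1) * (A.card : ℝ)) := by
  have hcard : (A ∪ {f}).card = A.card + 1 := by
    rw [Finset.union_comm, ← Finset.insert_eq, Finset.card_insert_of_notMem hfA]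
  have herase : (A ∪ {f}).erase e = insert f (A.erase e) := by
    rw [Finset.union_comm, ← Finset.insert_eq, Finset.erase_insert_of_ne hef.symm]
  have hfAe : f ∉ A.erase e := fun h => hfA (Finset.mem_of_mem_erase h)
  have hsumU : ∑ i ∈ (A ∪ {f}).erase e, x i = x f + ∑ i ∈ A.erase e, x i := by
    rw [herase, Finset.sum_insert hfAe]
  have hS : 0 ≤ ∑ i ∈ A.erase e, x i :=
    Finset.sum_nonneg fun i hi => (hx i (hA (Finset.mem_of_mem_erase hi))).1
  have hkxf : x e + x f ≤ (k : ℝ) := by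
    refine le_trans ?_ hsum
    rw [← Finset.sum_pair hef]
    exact Finset.sum_le_sum_of_subset_of_nonneg
      (by intro i hi; rcases Finset.mem_insert.mp hi with h | h
          · exact h ▸ hA he
          · exact (Finset.mem_singleton.mp h) ▸ hfN)
      (fun i hi _ => (hx i hi).1)
  have hn1 : 1 ≤ A.card := Finset.card_pos.mpr ⟨e, he⟩
  have hnn : (1:ℝ) ≤ (A.card : ℝ) := by exact_mod_cast hn1
  constructor
  · rw [hcard, hsumU]
    push_cast
    rcases eq_or_lt_of_le hn1 with h1 | h2
    · have hAe : A = {e} := by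
        rcases Finset.card_eq_one.mp h1.symm with ⟨a, ha⟩
        rw [ha] at he ⊢
        rw [Finset.mem_singleton.mp he]
      subst hAe
      simp only [Finset.erase_singleton, Finset.sum_empty, Finset.card_singleton]
      norm_num
      ring
    · have h2' : (2:ℝ) ≤ (A.card : ℝ) := by exact_mod_cast h2
      have hne0 : (A.card : ℝ) ≠ 0 := by linarith
      have hne1 : (A.card : ℝ) - 1 ≠ 0 := by intro h; linarith [h]
      have hnep : (A.card : ℝ) + 1 ≠ 0 := by linarith
      have hsq : ((A.card : ℝ))^2 - 1 ≠ 0 := by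
        have : ((A.card : ℝ))^2 - 1 = ((A.card : ℝ) - 1) * ((A.card : ℝ) + 1) := by ring
        rw [this]; exact mul_ne_zero hne1 hnep
      rw [show (A.card : ℝ) + 1 - 1 = A.card by ring]
      field_simp
      ring
  · apply add_nonneg
    · apply div_nonneg (by linarith) (by positivity)
    · apply div_nonneg (by linarith)
      apply mul_nonneg (by nlinarith) (by linarith)
end
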